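/- arXiv:2303.13021 — 5 statements merged into one kernel-verified Lean document; each statement's English description precedes it below -/
import Mathlib

section
/- For any λ ∈ ℝ, α ≥ 0, γ₀ > 1/2, and D > 0, there exists a constant C > 0 such that for all t ≥ 0 and x ∈ ℝ, ∫_ℝ (1+t)^{-α} e^{-|x - y - λ t|²/(D(1+t))} (1 + |y|²)^{-γ₀} dy ≤ C (1+t)^{-α} (1 + |x - λ t|²/(1+t))^{-γ₀}. -/
open MeasureTheory Real

lemma aux_int (γ : ℝ) (hγ : 1/2 < γ) : Integrable (fun y : ℝ => (1 + y^2) ^ (-γ)) := by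
  have h := integrable_rpow_neg_one_add_norm_sq (E := ℝ) (μ := volume) (r := 2*γ)
    (by simp; linarith)
  apply h.congr
  filter_upwards with y
  rw [Real.norm_eq_abs, sq_abs]
  ring_nf

lemma aux_exp (a γ : ℝ) (ha : 0 < a) :
    ∃ c > (0:ℝ), ∀ u : ℝ, 0 ≤ u → Real.exp (-(u / a)) ≤ c * (1 + u) ^ (-γ) := by
  set n := ⌈γ⌉₊ with hn
  refine ⟨Real.exp (1/a) * (n.factorial) * a ^ n, by positivity, fun u hu => ?_⟩
  have h1u : (0:ℝ) < 1 + u := by linarith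
  rw [Real.rpow_neg h1u.le, ← div_eq_mul_inv, le_div_iff₀ (Real.rpow_pos_of_pos h1u _)]
  set w : ℝ := (1 + u) / a with hw
  have hwpos : 0 < w := by positivity
  have key : w ^ n ≤ n.factorial * Real.exp w := by
    have h2 : w ^ n / n.factorial ≤ Real.exp w := by
      calc w ^ n / n.factorial ≤ ∑ i ∈ Finset.range (n+1), w ^ i / i.factorial :=
            Finset.single_le_sum (f := fun i => w ^ i / (i.factorial : ℝ))
              (fun i _ => by positivity) (Finset.self_mem_range_succ n)
        _ ≤ Real.exp w := Real.sum_le_exp_of_nonneg hwpos.le _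
    rw [div_le_iff₀ (by positivity)] at h2
    linarith [h2]
  have hpow : (1 + u) ^ γ ≤ (1 + u) ^ (n : ℝ) :=
    Real.rpow_le_rpow_of_exponent_le (by linarith) (Nat.le_ceil γ)
  have hexp : Real.exp (-(u/a)) = Real.exp (1/a) * Real.exp (-w) := by
    rw [← Real.exp_add]; congr 1; rw [hw]; field_simp; ring
  calc Real.exp (-(u/a)) * (1 + u) ^ γ ≤ Real.exp (-(u/a)) * (1 + u) ^ (n:ℝ) := by
        apply mul_le_mul_of_nonneg_left hpow (Real.exp_nonneg _)
    _ = Real.exp (1/a) * (Real.exp (-w) * (a * w) ^ n) := by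
        rw [hexp, Real.rpow_natCast]
        have : a * w = 1 + u := by rw [hw]; field_simp
        rw [this]; ring
    _ ≤ Real.exp (1/a) * (Real.exp (-w) * (a ^ n * (n.factorial * Real.exp w))) := by
        apply mul_le_mul_of_nonneg_left _ (Real.exp_nonneg _)
        apply mul_le_mul_of_nonneg_left _ (Real.exp_nonneg _)
        rw [mul_pow]
        exact mul_le_mul_of_nonneg_left key (by positivity)
    _ = Real.exp (1/a) * n.factorial * a ^ n := by
        have : Real.exp (-w) * Real.exp w = 1 := by rw [← Real.exp_add]; simp
        calc Real.exp (1/a) * (Real.exp (-w) * (a ^ n * (↑n.factorial * Real.exp w)))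
            = Real.exp (1/a) * ↑n.factorial * a ^ n * (Real.exp (-w) * Real.exp w) := by ring
          _ = Real.exp (1/a) * ↑n.factorial * a ^ n := by rw [this, mul_one]

set_option maxHeartbeats 2000000 in
lemma aux_core (γ D : ℝ) (hγ : 1/2 < γ) (hD : 0 < D) :
    ∃ C > (0:ℝ), ∀ s : ℝ, 1 ≤ s → ∀ z : ℝ,
      (∫ y : ℝ, Real.exp (-(z - y)^2 / (D * s)) * (1 + y^2) ^ (-γ))
        ≤ C * (1 + z^2 / s) ^ (-γ) := by
  obtain ⟨c₁, hc₁pos, hc₁⟩ := aux_exp (4*D) γ (by positivity)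
  have hg : Integrable (fun y : ℝ => (1 + y^2) ^ (-γ)) := aux_int γ hγ
  set M : ℝ := ∫ y : ℝ, (1 + y^2) ^ (-γ) with hM
  have hMnn : 0 ≤ M := integral_nonneg (fun y => Real.rpow_nonneg (by positivity) _)
  have hsqnn : (0:ℝ) ≤ Real.sqrt (π * D) := Real.sqrt_nonneg _
  have h8pos : (0:ℝ) < 8 ^ γ := Real.rpow_pos_of_pos (by norm_num) _
  refine ⟨c₁ * M + 8 ^ γ * (1 + Real.sqrt (π * D)), ?_, fun s hs z => ?_⟩
  · have h1 : (0:ℝ) < 8 ^ γ * (1 + Real.sqrt (π * D)) :=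
      mul_pos h8pos (by linarith)
    have h2 : 0 ≤ c₁ * M := mul_nonneg hc₁pos.le hMnn
    linarith
  have hspos : (0:ℝ) < s := by linarith
  have hDs : (0:ℝ) < D * s := by positivity
  have hQpos : (0:ℝ) < 1 + z^2/s := by positivity
  have hPpos : (0:ℝ) < 1 + z^2/4 := by positivity
  set R : ℝ := (1 + z^2/s) ^ (-γ) with hR
  have hRpos : 0 < R := Real.rpow_pos_of_pos hQpos _
  set f : ℝ → ℝ := fun y => Real.exp (-(z - y)^2 / (D * s)) * (1 + y^2) ^ (-γ) with hf
  have hfnn : ∀ y, 0 ≤ f y :=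
    fun y => mul_nonneg (Real.exp_nonneg _) (Real.rpow_nonneg (by positivity) _)
  have hgnn : ∀ y : ℝ, (0:ℝ) ≤ (1 + y^2) ^ (-γ) :=
    fun y => Real.rpow_nonneg (by positivity) _
  have hfle : ∀ y, f y ≤ (1 + y^2) ^ (-γ) := by
    intro y
    have h1 : Real.exp (-(z - y)^2 / (D*s)) ≤ 1 := by
      rw [Real.exp_le_one_iff]
      apply div_nonpos_of_nonpos_of_nonneg (neg_nonpos.mpr (sq_nonneg _)) hDs.le
    calc f y ≤ 1 * (1+y^2)^(-γ) := mul_le_mul_of_nonneg_right h1 (hgnn y)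
      _ = _ := one_mul _
  have hcont : Continuous f := by
    apply Continuous.mul
    · exact Real.continuous_exp.comp (by continuity)
    · exact ((continuous_const.add (continuous_pow 2)).rpow_const
        (fun y => Or.inl (by positivity : (1:ℝ) + y^2 ≠ 0)))
  have hmeas : Measurable f := hcont.measurable
  have hfi : Integrable f := by
    apply hg.mono' hmeas.aestronglyMeasurable
    filter_upwards with y
    rw [Real.norm_eq_abs, abs_of_nonneg (hfnn y)]
    exact hfle y
  set E : Set ℝ := Set.Icc (z - |z|/2) (z + |z|/2) with hEdef
  have hE : MeasurableSet E := measurableSet_Icc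
  -- pointwise bounds
  have hEbound : ∀ y ∈ E, (1 + y^2) ^ (-γ) ≤ (1 + z^2/4) ^ (-γ) := by
    intro y hy
    obtain ⟨h1, h2⟩ := hy
    have hy2 : z^2/4 ≤ y^2 := by
      rcases abs_cases z with ⟨he, hz0⟩ | ⟨he, hz0⟩ <;> nlinarith
    exact Real.rpow_le_rpow_of_nonpos hPpos (by linarith) (by linarith)
  -- complement bound
  have hcomp : ∫ y in Eᶜ, f y ≤ (c₁ * M) * R := by
    have hDne : D ≠ 0 := hD.ne'
    have hsne : s ≠ 0 := hspos.ne'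
    have hexpeq : -(z^2/4) / (D*s) = -((z^2/s) / (4*D)) := by
      field_simp
    have hb : ∀ y ∈ Eᶜ, f y ≤ Real.exp (-(z^2/4) / (D*s)) * (1 + y^2) ^ (-γ) := by
      intro y hy
      have hy' : y ∉ E := hy
      rw [hEdef, Set.mem_Icc, not_and_or, not_le, not_le] at hy'
      have hsq : z^2/4 ≤ (z - y)^2 := by
        rcases hy' with h | h <;>
        · rcases abs_cases z with ⟨he, hz0⟩ | ⟨he, hz0⟩ <;> nlinarith
      apply mul_le_mul_of_nonneg_right _ (hgnn y)
      apply Real.exp_le_exp.mpr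
      apply div_le_div_of_nonneg_right _ hDs.le
      linarith
    calc ∫ y in Eᶜ, f y
        ≤ ∫ y in Eᶜ, Real.exp (-(z^2/4)/(D*s)) * (1 + y^2) ^ (-γ) :=
          setIntegral_mono_on hfi.integrableOn ((hg.const_mul _).integrableOn) hE.compl hb
      _ ≤ ∫ y, Real.exp (-(z^2/4)/(D*s)) * (1 + y^2) ^ (-γ) :=
          setIntegral_le_integral (hg.const_mul _)
            (Filter.Eventually.of_forall fun y => mul_nonneg (Real.exp_nonneg _) (hgnn y))
      _ = Real.exp (-(z^2/4)/(D*s)) * M := integral_const_mul _ _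
      _ ≤ (c₁ * R) * M := by
          apply mul_le_mul_of_nonneg_right _ hMnn
          rw [hexpeq]
          exact hc₁ (z^2/s) (by positivity)
      _ = (c₁ * M) * R := by ring
  -- key algebra shared by both cases : √s and |z| bounds
  have habs : |z| ≤ (1 + z^2) ^ γ := by
    calc |z| = Real.sqrt (z^2) := (Real.sqrt_sq_eq_abs z).symm
      _ ≤ Real.sqrt (1 + z^2) := Real.sqrt_le_sqrt (by linarith)
      _ = (1 + z^2) ^ ((1:ℝ)/2) := Real.sqrt_eq_rpow _
      _ ≤ (1 + z^2) ^ γ := Real.rpow_le_rpow_of_exponent_le (by nlinarith) (by linarith)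
  have hfinal : (2 * (1 + z^2)) ^ γ ≤ 8 ^ γ * (1 + z^2/4) ^ γ := by
    rw [← Real.mul_rpow (by norm_num) hPpos.le]
    exact Real.rpow_le_rpow (by positivity) (by linarith) (by linarith)
  -- main set bound
  have hEint : ∫ y in E, f y ≤ 8 ^ γ * (1 + Real.sqrt (π * D)) * R := by
    by_cases hzs : z^2 ≤ s
    · -- use measure of E
      have step1 : ∫ y in E, f y ≤ |z| * (1 + z^2/4) ^ (-γ) := by
        calc ∫ y in E, f y ≤ ∫ _y in E, (1 + z^2/4) ^ (-γ) := by
              apply setIntegral_mono_on hfi.integrableOn _ hE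
                (fun y hy => (hfle y).trans (hEbound y hy))
              exact integrableOn_const measure_Icc_lt_top.ne
          _ = (volume E).toReal * (1 + z^2/4) ^ (-γ) := by
              rw [setIntegral_const, smul_eq_mul]; rfl
          _ = |z| * (1 + z^2/4) ^ (-γ) := by
              rw [hEdef, Real.volume_Icc]
              congr 1
              rw [show z + |z|/2 - (z - |z|/2) = |z| by ring, ENNReal.toReal_ofReal (abs_nonneg z)]
      refine step1.trans ?_
      have hQ2 : (1 + z^2/s) ^ γ ≤ 2 ^ γ := by
        apply Real.rpow_le_rpow hQpos.le _ (by linarith)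
        have : z^2/s ≤ 1 := by rw [div_le_one hspos]; exact hzs
        linarith
      have core : |z| * (1 + z^2/s) ^ γ ≤ 8 ^ γ * (1 + z^2/4) ^ γ := by
        calc |z| * (1 + z^2/s) ^ γ ≤ (1 + z^2) ^ γ * 2 ^ γ :=
              mul_le_mul habs hQ2 (Real.rpow_nonneg hQpos.le _) (Real.rpow_nonneg (by positivity) _)
          _ = (2 * (1 + z^2)) ^ γ := by
              rw [Real.mul_rpow (by norm_num) (by positivity)]; ring
          _ ≤ 8 ^ γ * (1 + z^2/4) ^ γ := hfinal
      have h1 : |z| * (1 + z^2/4) ^ (-γ) ≤ 8 ^ γ * R := by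
        rw [hR, Real.rpow_neg hPpos.le, Real.rpow_neg hQpos.le, ← div_eq_mul_inv, ← div_eq_mul_inv,
          div_le_div_iff₀ (Real.rpow_pos_of_pos hPpos _) (Real.rpow_pos_of_pos hQpos _)]
        exact core
      refine h1.trans ?_
      nlinarith [mul_nonneg (mul_nonneg h8pos.le hsqnn) hRpos.le]
    · -- use gaussian mass
      push_neg at hzs
      have hb' : (0:ℝ) < 1/(D*s) := by positivity
      have hgauss : (∫ y : ℝ, Real.exp (-(z - y)^2 / (D*s))) = Real.sqrt (π * (D * s)) := by
        have heq : (fun y : ℝ => Real.exp (-(z - y)^2 / (D*s)))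
            = fun y : ℝ => Real.exp (-(1/(D*s)) * (z - y)^2) := by
          funext y; congr 1; field_simp
        rw [heq, MeasureTheory.integral_sub_left_eq_self
          (fun x : ℝ => Real.exp (-(1/(D*s)) * x^2)) volume z, integral_gaussian]
        congr 1
        field_simp
      have step1 : ∫ y in E, f y ≤ (1 + z^2/4) ^ (-γ) * Real.sqrt (π * (D*s)) := by
        have hki : Integrable (fun y : ℝ => (1 + z^2/4) ^ (-γ) * Real.exp (-(1/(D*s)) * (z - y)^2)) :=
          ((integrable_exp_neg_mul_sq hb').comp_sub_left z).const_mul _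
        have hki' : Integrable (fun y : ℝ => (1 + z^2/4) ^ (-γ) * Real.exp (-(z - y)^2 / (D*s))) := by
          apply hki.congr
          filter_upwards with y
          congr 2
          field_simp
        calc ∫ y in E, f y ≤ ∫ y in E, (1 + z^2/4) ^ (-γ) * Real.exp (-(z - y)^2 / (D*s)) := by
              apply setIntegral_mono_on hfi.integrableOn hki'.integrableOn hE
              intro y hy
              calc f y = Real.exp (-(z - y)^2/(D*s)) * (1 + y^2) ^ (-γ) := rfl
                _ ≤ Real.exp (-(z - y)^2/(D*s)) * (1 + z^2/4) ^ (-γ) :=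
                    mul_le_mul_of_nonneg_left (hEbound y hy) (Real.exp_nonneg _)
                _ = (1 + z^2/4) ^ (-γ) * Real.exp (-(z - y)^2 / (D*s)) := by ring
          _ ≤ ∫ y : ℝ, (1 + z^2/4) ^ (-γ) * Real.exp (-(z - y)^2 / (D*s)) :=
              setIntegral_le_integral hki'
                (Filter.Eventually.of_forall fun y =>
                  mul_nonneg (Real.rpow_nonneg hPpos.le _) (Real.exp_nonneg _))
          _ = (1 + z^2/4) ^ (-γ) * ∫ y : ℝ, Real.exp (-(z - y)^2 / (D*s)) :=
              integral_const_mul _ _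
          _ = (1 + z^2/4) ^ (-γ) * Real.sqrt (π * (D*s)) := by rw [hgauss]
      refine step1.trans ?_
      have hsqrt : Real.sqrt (π * (D * s)) = Real.sqrt (π * D) * Real.sqrt s := by
        rw [show π * (D * s) = (π * D) * s by ring, Real.sqrt_mul (by positivity)]
      have core : Real.sqrt s * (1 + z^2/s) ^ γ ≤ 8 ^ γ * (1 + z^2/4) ^ γ := by
        have h1 : Real.sqrt s ≤ s ^ γ := by
          rw [Real.sqrt_eq_rpow]
          exact Real.rpow_le_rpow_of_exponent_le hs (by linarith)
        have h2 : (1 + z^2/s) ^ γ ≤ (2 * z^2 / s) ^ γ := by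
          apply Real.rpow_le_rpow hQpos.le _ (by linarith)
          have : 1 ≤ z^2/s := by rw [le_div_iff₀ hspos]; linarith
          have : z^2/s + z^2/s = 2*z^2/s := by ring
          linarith
        calc Real.sqrt s * (1 + z^2/s) ^ γ ≤ s ^ γ * (2 * z^2 / s) ^ γ :=
              mul_le_mul h1 h2 (Real.rpow_nonneg hQpos.le _) (Real.rpow_nonneg hspos.le _)
          _ = (s * (2 * z^2 / s)) ^ γ := by
              rw [Real.mul_rpow hspos.le (by positivity)]
          _ = (2 * z^2) ^ γ := by
              congr 1; field_simp
          _ ≤ (2 * (1 + z^2)) ^ γ :=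
              Real.rpow_le_rpow (by positivity) (by nlinarith) (by linarith)
          _ ≤ 8 ^ γ * (1 + z^2/4) ^ γ := hfinal
      have key : (1 + z^2/4) ^ (-γ) * Real.sqrt s ≤ 8 ^ γ * R := by
        rw [hR, Real.rpow_neg hPpos.le, Real.rpow_neg hQpos.le, mul_comm, ← div_eq_mul_inv,
          ← div_eq_mul_inv,
          div_le_div_iff₀ (Real.rpow_pos_of_pos hPpos _) (Real.rpow_pos_of_pos hQpos _)]
        exact core
      calc (1 + z^2/4) ^ (-γ) * Real.sqrt (π * (D*s))
          = Real.sqrt (π * D) * ((1 + z^2/4) ^ (-γ) * Real.sqrt s) := by rw [hsqrt]; ring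
        _ ≤ Real.sqrt (π * D) * (8 ^ γ * R) := mul_le_mul_of_nonneg_left key hsqnn
        _ ≤ 8 ^ γ * (1 + Real.sqrt (π * D)) * R := by
            nlinarith [mul_nonneg (mul_nonneg h8pos.le hsqnn) hRpos.le]
  -- combine
  rw [← integral_add_compl hE hfi]
  calc (∫ y in E, f y) + ∫ y in Eᶜ, f y
      ≤ 8 ^ γ * (1 + Real.sqrt (π * D)) * R + (c₁ * M) * R := add_le_add hEint hcomp
    _ = (c₁ * M + 8 ^ γ * (1 + Real.sqrt (π * D))) * R := by ring

theorem stmt1 (lam α γ₀ D : ℝ) (hα : 0 ≤ α) (hγ₀ : 1 / 2 < γ₀) (hD : 0 < D) :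
    ∃ C > (0:ℝ), ∀ t ≥ (0:ℝ), ∀ x : ℝ,
      (∫ y : ℝ, (1 + t) ^ (-α) * Real.exp (-(x - y - lam * t) ^ 2 / (D * (1 + t)))
          * (1 + y ^ 2) ^ (-γ₀))
        ≤ C * (1 + t) ^ (-α) * (1 + (x - lam * t) ^ 2 / (1 + t)) ^ (-γ₀) := by
  obtain ⟨C, hC, hcore⟩ := aux_core γ₀ D hγ₀ hD
  refine ⟨C, hC, fun t ht x => ?_⟩
  have hs : (1:ℝ) ≤ 1 + t := by linarith
  have hxy : ∀ y : ℝ, x - y - lam * t = x - lam * t - y := fun y => by ring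
  calc (∫ y : ℝ, (1 + t) ^ (-α) * Real.exp (-(x - y - lam * t) ^ 2 / (D * (1 + t)))
          * (1 + y ^ 2) ^ (-γ₀))
      = (1 + t) ^ (-α) * ∫ y : ℝ, Real.exp (-(x - lam * t - y) ^ 2 / (D * (1 + t)))
          * (1 + y ^ 2) ^ (-γ₀) := by
        simp only [hxy, mul_assoc]
        exact integral_const_mul _ _
    _ ≤ (1 + t) ^ (-α) * (C * (1 + (x - lam * t) ^ 2 / (1 + t)) ^ (-γ₀)) :=
        mul_le_mul_of_nonneg_left (hcore (1 + t) hs (x - lam * t))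
          (Real.rpow_nonneg (by linarith) _)
    _ = C * (1 + t) ^ (-α) * (1 + (x - lam * t) ^ 2 / (1 + t)) ^ (-γ₀) := by ring
end

section
/- For any β ≥ 0, γ ≥ 0, λ ∈ ℝ and D > 0, there exists a constant C > 0 such that for all t ≥ 0 and x ∈ ℝ, ∫₀^t ∫_ℝ e^{-(|x-y| + (t-s))/D} (1+s)^{-β} (1 + |y - λ s|²/(1+s))^{-γ} dy ds ≤ C (1+t)^{-β} (1 + |x - λ t|²/(1+t))^{-γ}. -/
open MeasureTheory Real

open Set

/-- Polynomial growth is dominated by exponential growth. -/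
lemma poly_le_exp' (p ε : ℝ) (hp : 0 ≤ p) (hε : 0 < ε) :
    ∃ K > (0:ℝ), ∀ r : ℝ, 0 ≤ r → (1 + r) ^ p ≤ K * Real.exp (ε * r) := by
  set n := ⌈p⌉₊ with hn
  refine ⟨2 ^ n * (1 + ((Nat.factorial n : ℕ) : ℝ) / ε ^ n), by positivity, ?_⟩
  intro r hr
  have h1r : (1:ℝ) ≤ 1 + r := by linarith
  have h1 : (1 + r) ^ p ≤ (1 + r) ^ (n : ℝ) :=
    Real.rpow_le_rpow_of_exponent_le h1r (Nat.le_ceil p)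
  rw [Real.rpow_natCast] at h1
  have h2 : (1 + r) ^ n ≤ 2 ^ n * (1 + r ^ n) := by
    rcases le_total r 1 with h | h
    · calc (1 + r) ^ n ≤ 2 ^ n := pow_le_pow_left₀ (by linarith) (by linarith) n
        _ ≤ 2 ^ n * (1 + r ^ n) := by
            nlinarith [pow_nonneg hr n, pow_pos (by norm_num : (0:ℝ) < 2) n]
    · calc (1 + r) ^ n ≤ (2 * r) ^ n := pow_le_pow_left₀ (by linarith) (by linarith) n
        _ = 2 ^ n * r ^ n := mul_pow 2 r n
        _ ≤ 2 ^ n * (1 + r ^ n) := by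
            nlinarith [pow_pos (by norm_num : (0:ℝ) < 2) n]
  have hfac : (0:ℝ) < ((Nat.factorial n : ℕ) : ℝ) := by exact_mod_cast Nat.factorial_pos n
  have hεn : (0:ℝ) < ε ^ n := pow_pos hε n
  have key : (ε * r) ^ n ≤ ((Nat.factorial n : ℕ) : ℝ) * Real.exp (ε * r) := by
    have h := Real.pow_div_factorial_le_exp _ (mul_nonneg hε.le hr) n
    calc (ε * r) ^ n = ((ε * r) ^ n / ((Nat.factorial n : ℕ) : ℝ)) * ((Nat.factorial n : ℕ) : ℝ) := by field_simp
      _ ≤ Real.exp (ε * r) * ((Nat.factorial n : ℕ) : ℝ) := mul_le_mul_of_nonneg_right h hfac.le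
      _ = ((Nat.factorial n : ℕ) : ℝ) * Real.exp (ε * r) := mul_comm _ _
  have h3 : r ^ n ≤ ((Nat.factorial n : ℕ) : ℝ) / ε ^ n * Real.exp (ε * r) := by
    have hrn : r ^ n = (ε * r) ^ n / ε ^ n := by
      rw [mul_pow]; field_simp
    rw [hrn, div_le_iff₀ hεn]
    calc (ε * r) ^ n ≤ ((Nat.factorial n : ℕ) : ℝ) * Real.exp (ε * r) := key
      _ = ((Nat.factorial n : ℕ) : ℝ) / ε ^ n * Real.exp (ε * r) * ε ^ n := by field_simp
  have h4 : (1:ℝ) ≤ Real.exp (ε * r) := Real.one_le_exp (by positivity)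
  calc (1 + r) ^ p ≤ (1 + r) ^ n := h1
    _ ≤ 2 ^ n * (1 + r ^ n) := h2
    _ ≤ 2 ^ n * (Real.exp (ε * r) + ((Nat.factorial n : ℕ) : ℝ) / ε ^ n * Real.exp (ε * r)) := by
        have := add_le_add h4 h3
        have h2n : (0:ℝ) ≤ 2 ^ n := by positivity
        exact mul_le_mul_of_nonneg_left this h2n
    _ = 2 ^ n * (1 + ((Nat.factorial n : ℕ) : ℝ) / ε ^ n) * Real.exp (ε * r) := by ring

/-- Flip a multiplicative inequality through a negative real power. -/
lemma rpow_neg_flip {a b k γ : ℝ} (hγ : 0 ≤ γ) (ha : 0 < a) (hb : 0 < b) (hk : 0 ≤ k)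
    (h : a ≤ k * b) : b ^ (-γ) ≤ k ^ γ * a ^ (-γ) := by
  have haγ : 0 < a ^ γ := Real.rpow_pos_of_pos ha γ
  have hbγ : 0 < b ^ γ := Real.rpow_pos_of_pos hb γ
  have h2 : a ^ γ ≤ k ^ γ * b ^ γ := by
    calc a ^ γ ≤ (k * b) ^ γ := Real.rpow_le_rpow ha.le h hγ
      _ = k ^ γ * b ^ γ := Real.mul_rpow hk hb.le
  rw [Real.rpow_neg hb.le, Real.rpow_neg ha.le, ← div_eq_mul_inv, inv_eq_one_div,
    div_le_div_iff₀ hbγ haγ, one_mul]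
  exact h2

/-- Spatial convolution pointwise bound. -/
lemma spatial_bound (γ D K₁ : ℝ) (hγ : 0 ≤ γ) (hD : 0 < D)
    (hK₁ : ∀ r : ℝ, 0 ≤ r → (1 + r) ^ (2*γ) ≤ K₁ * Real.exp ((1/(2*D)) * r))
    {M : ℝ} (hM : 1 ≤ M) (u v : ℝ) :
    Real.exp (-|u - v| / D) * (1 + v^2/M) ^ (-γ) ≤
      2 ^ γ * K₁ * (Real.exp (-|u - v| / (2*D)) * (1 + u^2/M) ^ (-γ)) := by
  have hM0 : (0:ℝ) < M := lt_of_lt_of_le one_pos hM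
  have ha : (0:ℝ) < 1 + u^2/M := by positivity
  have hb : (0:ℝ) < 1 + v^2/M := by positivity
  have base : 1 + u^2/M ≤ (2*(1+(u-v)^2)) * (1 + v^2/M) := by
    have h1 : u^2 ≤ 2*(u-v)^2 + 2*v^2 := by nlinarith [sq_nonneg (u - 2*v)]
    have h2 : u^2/M ≤ (2*(u-v)^2 + 2*v^2)/M := by gcongr
    have h3 : (u-v)^2 / M ≤ (u-v)^2 := by
      rw [div_le_iff₀ hM0]; nlinarith [sq_nonneg (u-v)]
    have h4 : (2*(u-v)^2 + 2*v^2)/M = 2*((u-v)^2/M) + 2*(v^2/M) := by ring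
    have h5 : (0:ℝ) ≤ v^2/M := by positivity
    have h6 : (0:ℝ) ≤ (u-v)^2 * (v^2/M) := by positivity
    nlinarith [sq_nonneg (u-v)]
  have hflip : (1 + v^2/M) ^ (-γ) ≤ (2*(1+(u-v)^2)) ^ γ * (1 + u^2/M) ^ (-γ) :=
    rpow_neg_flip hγ ha hb (by positivity) base
  have hpoly : (1+(u-v)^2) ^ γ ≤ K₁ * Real.exp ((1/(2*D)) * |u-v|) := by
    have e1 : 1+(u-v)^2 ≤ (1+|u-v|)^2 := by
      nlinarith [abs_nonneg (u-v), sq_abs (u-v)]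
    have e2 : (1+(u-v)^2) ^ γ ≤ ((1+|u-v|)^2) ^ γ :=
      Real.rpow_le_rpow (by positivity) e1 hγ
    have e3 : ((1+|u-v|)^2 : ℝ) ^ γ = (1+|u-v|) ^ (2*γ) := by
      rw [← Real.rpow_natCast (1+|u-v|) 2, ← Real.rpow_mul (by positivity)]
      norm_num
    rw [e3] at e2
    exact e2.trans (hK₁ _ (abs_nonneg _))
  have hsplit : (2*(1+(u-v)^2) : ℝ) ^ γ = 2 ^ γ * (1+(u-v)^2) ^ γ :=
    Real.mul_rpow (by norm_num) (by positivity)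
  have hexp : Real.exp (-|u - v| / D) * Real.exp ((1/(2*D)) * |u-v|) =
      Real.exp (-|u - v| / (2*D)) := by
    rw [← Real.exp_add]
    congr 1
    field_simp
    ring
  calc Real.exp (-|u - v| / D) * (1 + v^2/M) ^ (-γ)
      ≤ Real.exp (-|u - v| / D) * ((2*(1+(u-v)^2)) ^ γ * (1 + u^2/M) ^ (-γ)) := by
        exact mul_le_mul_of_nonneg_left hflip (Real.exp_nonneg _)
    _ = (1+(u-v)^2) ^ γ * (Real.exp (-|u - v| / D) * (2 ^ γ * (1 + u^2/M) ^ (-γ))) := by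
        rw [hsplit]; ring
    _ ≤ (K₁ * Real.exp ((1/(2*D)) * |u-v|)) * (Real.exp (-|u - v| / D) *
          (2 ^ γ * (1 + u^2/M) ^ (-γ))) := by
        refine mul_le_mul_of_nonneg_right hpoly ?_
        positivity
    _ = 2 ^ γ * K₁ * ((Real.exp (-|u - v| / D) * Real.exp ((1/(2*D)) * |u-v|)) *
          (1 + u^2/M) ^ (-γ)) := by ring
    _ = 2 ^ γ * K₁ * (Real.exp (-|u - v| / (2*D)) * (1 + u^2/M) ^ (-γ)) := by rw [hexp]

/-- Combined polynomial factor bound. -/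
lemma poly_combo (β γ lam D K₂ : ℝ) (hβ : 0 ≤ β) (hγ : 0 ≤ γ) (hD : 0 < D)
    (hK₂ : ∀ r : ℝ, 0 ≤ r →
      (1 + r) ^ (β + 2*γ) ≤ K₂ * Real.exp ((1/(2*D*(1+2*|lam|))) * r))
    (τ : ℝ) (hτ : 0 ≤ τ) :
    (1+τ)^β * (1+2*lam^2*τ^2)^γ ≤ K₂ * Real.exp (τ/(2*D)) := by
  have hc1 : (1:ℝ) ≤ 1 + 2*|lam| := by linarith [abs_nonneg lam]
  have hc0 : (0:ℝ) < 1 + 2*|lam| := by linarith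
  have hcτ : 0 ≤ (1+2*|lam|)*τ := mul_nonneg hc0.le hτ
  have p1 : (1+τ)^β ≤ (1+(1+2*|lam|)*τ)^β :=
    Real.rpow_le_rpow (by linarith) (by nlinarith) hβ
  have p2 : (1+2*lam^2*τ^2 : ℝ) ≤ (1+(1+2*|lam|)*τ)^2 := by
    nlinarith [sq_abs lam, abs_nonneg lam, sq_nonneg τ, sq_nonneg (|lam| * τ),
      mul_nonneg (abs_nonneg lam) hτ, sq_nonneg ((1-2*|lam|)*τ)]
  have p2' : (1+2*lam^2*τ^2)^γ ≤ (1+(1+2*|lam|)*τ)^(2*γ) := by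
    have e2 : (1+2*lam^2*τ^2)^γ ≤ ((1+(1+2*|lam|)*τ)^2)^γ :=
      Real.rpow_le_rpow (by positivity) p2 hγ
    have e3 : ((1+(1+2*|lam|)*τ)^2 : ℝ)^γ = (1+(1+2*|lam|)*τ)^(2*γ) := by
      rw [← Real.rpow_natCast (1+(1+2*|lam|)*τ) 2,
        ← Real.rpow_mul (by positivity)]
      norm_num
    rwa [e3] at e2
  have hprod : (1+τ)^β * (1+2*lam^2*τ^2)^γ ≤ (1+(1+2*|lam|)*τ)^(β+2*γ) := by
    rw [Real.rpow_add (by positivity : (0:ℝ) < 1+(1+2*|lam|)*τ)]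
    exact mul_le_mul p1 p2' (Real.rpow_nonneg (by positivity) γ)
      (Real.rpow_nonneg (by positivity) β)
  have happ := hK₂ ((1+2*|lam|)*τ) hcτ
  have harg : (1/(2*D*(1+2*|lam|))) * ((1+2*|lam|)*τ) = τ/(2*D) := by
    field_simp
  calc (1+τ)^β * (1+2*lam^2*τ^2)^γ ≤ (1+(1+2*|lam|)*τ)^(β+2*γ) := hprod
    _ ≤ K₂ * Real.exp ((1/(2*D*(1+2*|lam|))) * ((1+2*|lam|)*τ)) := happ
    _ = K₂ * Real.exp (τ/(2*D)) := by rw [harg]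

/-- Temporal pointwise bound. -/
lemma temporal_bound (β γ lam D K₂ : ℝ) (hβ : 0 ≤ β) (hγ : 0 ≤ γ) (hD : 0 < D)
    (hpoly : ∀ τ : ℝ, 0 ≤ τ →
      (1+τ)^β * (1+2*lam^2*τ^2)^γ ≤ K₂ * Real.exp (τ/(2*D)))
    {s t : ℝ} (hs : 0 ≤ s) (hst : s ≤ t) (x : ℝ) :
    Real.exp (-(t-s)/D) * (1+s)^(-β) * (1+(x-lam*s)^2/(1+s))^(-γ) ≤
      2^γ * K₂ * (Real.exp (-(t-s)/(2*D)) *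
        ((1+t)^(-β) * (1+(x-lam*t)^2/(1+t))^(-γ))) := by
  have hτ : 0 ≤ t - s := by linarith
  have hP : (0:ℝ) < 1 + s := by linarith
  have hT : (0:ℝ) < 1 + t := by linarith
  have hw : (0:ℝ) < 1 + (x-lam*s)^2/(1+s) := by positivity
  have hz : (0:ℝ) < 1 + (x-lam*t)^2/(1+t) := by positivity
  -- temporal decay flip
  have hflipβ : (1+s)^(-β) ≤ (1+(t-s))^β * (1+t)^(-β) := by
    have hbase : 1 + t ≤ (1+(t-s)) * (1+s) := by nlinarith
    exact rpow_neg_flip hβ hT hP (by positivity) hbase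
  -- spatial recentering flip
  have hflipγ : (1+(x-lam*s)^2/(1+s))^(-γ) ≤
      (2*(1+2*lam^2*(t-s)^2))^γ * (1+(x-lam*t)^2/(1+t))^(-γ) := by
    have hzw : (x-lam*t)^2 ≤ 2*(x-lam*s)^2 + 2*(lam*(t-s))^2 := by
      nlinarith [sq_nonneg ((x-lam*s) + lam*(t-s))]
    have h1 : (x-lam*t)^2/(1+t) ≤ (x-lam*t)^2/(1+s) :=
      div_le_div_of_nonneg_left (sq_nonneg _) hP (by linarith)
    have h2 : (x-lam*t)^2/(1+s) ≤ (2*(x-lam*s)^2 + 2*(lam*(t-s))^2)/(1+s) := by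
      gcongr
    have h3 : (2*(x-lam*s)^2 + 2*(lam*(t-s))^2)/(1+s) =
        2*((x-lam*s)^2/(1+s)) + 2*((lam*(t-s))^2/(1+s)) := by ring
    have h4 : (lam*(t-s))^2/(1+s) ≤ (lam*(t-s))^2 := by
      rw [div_le_iff₀ hP]; nlinarith [sq_nonneg (lam*(t-s))]
    have hbase : 1 + (x-lam*t)^2/(1+t) ≤
        (2*(1+2*lam^2*(t-s)^2)) * (1 + (x-lam*s)^2/(1+s)) := by
      have h5 : (0:ℝ) ≤ (x-lam*s)^2/(1+s) := by positivity
      have h6 : (0:ℝ) ≤ lam^2*(t-s)^2 * ((x-lam*s)^2/(1+s)) := by positivity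
      have h7 : (lam*(t-s))^2 = lam^2*(t-s)^2 := by ring
      nlinarith [sq_nonneg (lam*(t-s))]
    exact rpow_neg_flip hγ hz hw (by positivity) hbase
  have hexp : Real.exp (-(t-s)/D) * Real.exp ((t-s)/(2*D)) =
      Real.exp (-(t-s)/(2*D)) := by
    rw [← Real.exp_add]
    congr 1
    field_simp
    ring
  have hsplit : (2*(1+2*lam^2*(t-s)^2) : ℝ)^γ = 2^γ * (1+2*lam^2*(t-s)^2)^γ :=
    Real.mul_rpow (by norm_num) (by positivity)
  calc Real.exp (-(t-s)/D) * (1+s)^(-β) * (1+(x-lam*s)^2/(1+s))^(-γ)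
      ≤ Real.exp (-(t-s)/D) * ((1+(t-s))^β * (1+t)^(-β)) *
          ((2*(1+2*lam^2*(t-s)^2))^γ * (1+(x-lam*t)^2/(1+t))^(-γ)) := by
        refine mul_le_mul ?_ hflipγ (Real.rpow_nonneg hw.le _) ?_
        · exact mul_le_mul_of_nonneg_left hflipβ (Real.exp_nonneg _)
        · positivity
    _ = 2^γ * ((1+(t-s))^β * (1+2*lam^2*(t-s)^2)^γ) *
          (Real.exp (-(t-s)/D) * ((1+t)^(-β) * (1+(x-lam*t)^2/(1+t))^(-γ))) := by
        rw [hsplit]; ring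
    _ ≤ 2^γ * (K₂ * Real.exp ((t-s)/(2*D))) *
          (Real.exp (-(t-s)/D) * ((1+t)^(-β) * (1+(x-lam*t)^2/(1+t))^(-γ))) := by
        refine mul_le_mul_of_nonneg_right
          (mul_le_mul_of_nonneg_left (hpoly (t-s) hτ) (by positivity)) ?_
        positivity
    _ = 2^γ * K₂ * ((Real.exp (-(t-s)/D) * Real.exp ((t-s)/(2*D))) *
          ((1+t)^(-β) * (1+(x-lam*t)^2/(1+t))^(-γ))) := by ring
    _ = 2^γ * K₂ * (Real.exp (-(t-s)/(2*D)) *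
          ((1+t)^(-β) * (1+(x-lam*t)^2/(1+t))^(-γ))) := by rw [hexp]

/-- `exp (-(b|y|))` is integrable on the line. -/
lemma expabs_integrable {b : ℝ} (hb : 0 < b) :
    Integrable (fun y : ℝ => Real.exp (-(b * |y|))) := by
  have h1 : IntegrableOn (fun y : ℝ => Real.exp (-(b * |y|))) (Ioi (0:ℝ)) := by
    refine (exp_neg_integrableOn_Ioi 0 hb).congr_fun (fun y hy => ?_) measurableSet_Ioi
    rw [abs_of_pos hy]
    ring_nf
  have h2 : IntegrableOn (fun y : ℝ => Real.exp (-(b * |y|))) (Iic (0:ℝ)) := by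
    rw [← Measure.map_neg_eq_self (volume : Measure ℝ)]
    have m : MeasurableEmbedding fun x : ℝ => -x :=
      (Homeomorph.neg ℝ).measurableEmbedding
    rw [m.integrableOn_map_iff]
    simp_rw [Function.comp_def, abs_neg, neg_preimage, neg_Iic, neg_zero]
    exact (integrableOn_Ici_iff_integrableOn_Ioi).mpr h1
  have h3 := h2.union h1
  rwa [Iic_union_Ioi, integrableOn_univ] at h3

theorem stmt2 (β γ lam D : ℝ) (hβ : 0 ≤ β) (hγ : 0 ≤ γ) (hD : 0 < D) :
    ∃ C > (0:ℝ), ∀ t ≥ (0:ℝ), ∀ x : ℝ,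
      (∫ s in (0:ℝ)..t, ∫ y : ℝ,
          Real.exp (-(|x - y| + (t - s)) / D) * (1 + s) ^ (-β)
            * (1 + (y - lam * s) ^ 2 / (1 + s)) ^ (-γ))
        ≤ C * (1 + t) ^ (-β) * (1 + (x - lam * t) ^ 2 / (1 + t)) ^ (-γ) := by
  obtain ⟨K₁, hK₁pos, hK₁⟩ := poly_le_exp' (2*γ) (1/(2*D)) (by positivity) (by positivity)
  have hcpos : (0:ℝ) < 1+2*|lam| := by positivity
  obtain ⟨K₂, hK₂pos, hK₂⟩ := poly_le_exp' (β+2*γ) (1/(2*D*(1+2*|lam|)))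
    (by positivity) (by positivity)
  have hpoly := poly_combo β γ lam D K₂ hβ hγ hD hK₂
  set A := ∫ y : ℝ, Real.exp (-((1/(2*D)) * |y|)) with hA
  have hA0 : 0 ≤ A := integral_nonneg fun y => Real.exp_nonneg _
  refine ⟨2*D * ((A+1) * (2^γ*K₁) * (2^γ*K₂)), by positivity, ?_⟩
  intro t ht x
  have hT : (0:ℝ) < 1 + t := by linarith
  have hQz : (0:ℝ) < 1 + (x - lam*t)^2/(1+t) := by
    have := div_nonneg (sq_nonneg (x - lam*t)) hT.le
    linarith
  set Q : ℝ := (1 + t) ^ (-β) * (1 + (x - lam * t) ^ 2 / (1 + t)) ^ (-γ) with hQ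
  have hQ0 : 0 ≤ Q := by
    rw [hQ]
    exact mul_nonneg (Real.rpow_nonneg hT.le _) (Real.rpow_nonneg hQz.le _)
  set Cb : ℝ := (A+1) * (2^γ*K₁) * (2^γ*K₂) with hCb
  have hCb0 : 0 ≤ Cb := by rw [hCb]; positivity
  rw [intervalIntegral.integral_of_le ht]
  -- pointwise-in-s bound of the inner integral
  have key : ∀ s ∈ Set.Ioc (0:ℝ) t,
      (∫ y : ℝ, Real.exp (-(|x - y| + (t - s)) / D) * (1 + s) ^ (-β)
        * (1 + (y - lam * s) ^ 2 / (1 + s)) ^ (-γ))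
      ≤ Cb * Q * Real.exp (-(t-s)/(2*D)) := by
    intro s hsm
    obtain ⟨hs0', hst⟩ := hsm
    have hs0 : (0:ℝ) ≤ s := hs0'.le
    have hP : (0:ℝ) < 1 + s := by linarith
    have hBy : ∀ y : ℝ, (0:ℝ) < 1 + (y - lam*s)^2/(1+s) := by
      intro y
      have := div_nonneg (sq_nonneg (y - lam*s)) hP.le
      linarith
    have hBx : (0:ℝ) < 1 + (x - lam*s)^2/(1+s) := by
      have := div_nonneg (sq_nonneg (x - lam*s)) hP.le
      linarith
    set Cs : ℝ := 2^γ * K₁ * (Real.exp (-(t-s)/D) * (1+s)^(-β) *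
        (1+(x-lam*s)^2/(1+s))^(-γ)) with hCs
    have hCs0 : 0 ≤ Cs := by
      rw [hCs]
      have h1 : (0:ℝ) ≤ (1+s)^(-β) := Real.rpow_nonneg hP.le _
      have h2 : (0:ℝ) ≤ (1+(x-lam*s)^2/(1+s))^(-γ) := Real.rpow_nonneg hBx.le _
      positivity
    have hgint : Integrable (fun y : ℝ => Real.exp (-((1/(2*D)) * |x - y|)) * Cs) := by
      have h0 : Integrable (fun y : ℝ => Real.exp (-((1/(2*D)) * |y|))) :=
        expabs_integrable (by positivity)
      exact (h0.comp_sub_left x).mul_const Cs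
    have hle : ∀ y : ℝ, Real.exp (-(|x - y| + (t - s)) / D) * (1 + s) ^ (-β)
        * (1 + (y - lam * s) ^ 2 / (1 + s)) ^ (-γ)
        ≤ Real.exp (-((1/(2*D)) * |x - y|)) * Cs := by
      intro y
      have hsp := spatial_bound γ D K₁ hγ hD hK₁ (M := 1+s) (by linarith)
          (x - lam*s) (y - lam*s)
      have huv : (x - lam*s) - (y - lam*s) = x - y := by ring
      rw [huv] at hsp
      have hsplitexp : Real.exp (-(|x - y| + (t - s)) / D)
          = Real.exp (-|x-y|/D) * Real.exp (-(t-s)/D) := by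
        rw [← Real.exp_add]; congr 1; field_simp; ring
      rw [hsplitexp, hCs]
      have hBnn : (0:ℝ) ≤ Real.exp (-(t-s)/D) * (1+s)^(-β) :=
        mul_nonneg (Real.exp_nonneg _) (Real.rpow_nonneg hP.le _)
      have hee : Real.exp (-|x-y|/(2*D)) = Real.exp (-((1/(2*D)) * |x - y|)) := by
        congr 1; ring
      calc Real.exp (-|x-y|/D) * Real.exp (-(t-s)/D) * (1 + s) ^ (-β)
            * (1 + (y - lam * s) ^ 2 / (1 + s)) ^ (-γ)
          = (Real.exp (-(t-s)/D) * (1+s)^(-β)) *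
            (Real.exp (-|x-y|/D) * (1 + (y - lam * s) ^ 2 / (1 + s)) ^ (-γ)) := by ring
        _ ≤ (Real.exp (-(t-s)/D) * (1+s)^(-β)) *
            (2^γ * K₁ * (Real.exp (-|x-y|/(2*D)) * (1+(x-lam*s)^2/(1+s))^(-γ))) :=
            mul_le_mul_of_nonneg_left hsp hBnn
        _ = Real.exp (-|x-y|/(2*D)) * (2^γ * K₁ *
            (Real.exp (-(t-s)/D) * (1+s)^(-β) * (1+(x-lam*s)^2/(1+s))^(-γ))) := by ring
        _ = Real.exp (-((1/(2*D)) * |x - y|)) * (2^γ * K₁ *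
            (Real.exp (-(t-s)/D) * (1+s)^(-β) * (1+(x-lam*s)^2/(1+s))^(-γ))) := by
            rw [hee]
    have hf0 : ∀ y : ℝ, (0:ℝ) ≤ Real.exp (-(|x - y| + (t - s)) / D) * (1 + s) ^ (-β)
        * (1 + (y - lam * s) ^ 2 / (1 + s)) ^ (-γ) := by
      intro y
      exact mul_nonneg (mul_nonneg (Real.exp_nonneg _) (Real.rpow_nonneg hP.le _))
        (Real.rpow_nonneg (hBy y).le _)
    have h1 := integral_mono_of_nonneg
      (Filter.Eventually.of_forall hf0) hgint (Filter.Eventually.of_forall hle)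
    have h2 : (∫ y : ℝ, Real.exp (-((1/(2*D)) * |x - y|)) * Cs) = A * Cs := by
      rw [integral_mul_const]
      congr 1
      exact integral_sub_left_eq_self (fun z : ℝ => Real.exp (-((1/(2*D)) * |z|))) volume x
    have htmp := temporal_bound β γ lam D K₂ hβ hγ hD hpoly hs0 hst x
    calc (∫ y : ℝ, Real.exp (-(|x - y| + (t - s)) / D) * (1 + s) ^ (-β)
          * (1 + (y - lam * s) ^ 2 / (1 + s)) ^ (-γ))
        ≤ A * Cs := h2 ▸ h1
      _ = A * (2^γ * K₁ * (Real.exp (-(t-s)/D) * (1+s)^(-β) *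
            (1+(x-lam*s)^2/(1+s))^(-γ))) := by rw [hCs]
      _ ≤ A * (2^γ * K₁ * (2^γ * K₂ * (Real.exp (-(t-s)/(2*D)) *
            ((1+t)^(-β) * (1+(x-lam*t)^2/(1+t))^(-γ))))) := by
          refine mul_le_mul_of_nonneg_left (mul_le_mul_of_nonneg_left htmp ?_) hA0
          positivity
      _ ≤ (A+1) * (2^γ * K₁ * (2^γ * K₂ * (Real.exp (-(t-s)/(2*D)) *
            ((1+t)^(-β) * (1+(x-lam*t)^2/(1+t))^(-γ))))) := by
          refine mul_le_mul_of_nonneg_right (by linarith) ?_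
          have h3 : (0:ℝ) ≤ (1+t)^(-β) := Real.rpow_nonneg hT.le _
          have h4 : (0:ℝ) ≤ (1+(x-lam*t)^2/(1+t))^(-γ) := Real.rpow_nonneg hQz.le _
          positivity
      _ = Cb * Q * Real.exp (-(t-s)/(2*D)) := by rw [hCb, hQ]; ring
  -- the outer exponential integral
  have hcont : Continuous fun s : ℝ => Real.exp (-(t-s)/(2*D)) := by
    fun_prop
  have hIexp : (∫ s in (0:ℝ)..t, Real.exp (-(t-s)/(2*D)))
      = 2*D*Real.exp (-(t-t)/(2*D)) - 2*D*Real.exp (-(t-0)/(2*D)) := by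
    refine intervalIntegral.integral_eq_sub_of_hasDerivAt
      (f := fun u : ℝ => 2*D*Real.exp (-(t-u)/(2*D))) (fun s hs => ?_)
      (hcont.intervalIntegrable 0 t)
    have h := ((((hasDerivAt_id s).const_sub t).neg).div_const (2*D)).exp.const_mul (2*D)
    refine h.congr_deriv ?_
    have : Real.exp (-(t-s)/(2*D)) ≠ 0 := Real.exp_ne_zero _
    simp only [Pi.neg_apply, id]
    field_simp
  have hIoc : (∫ s in Set.Ioc (0:ℝ) t, Real.exp (-(t-s)/(2*D)))
      ≤ 2*D := by
    rw [← intervalIntegral.integral_of_le ht, hIexp]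
    have h5 : (0:ℝ) ≤ 2*D*Real.exp (-(t-0)/(2*D)) := by positivity
    have h6 : Real.exp (-(t-t)/(2*D)) = 1 := by norm_num
    rw [h6]
    linarith
  have hgout : IntegrableOn (fun s : ℝ => Cb * Q * Real.exp (-(t-s)/(2*D)))
      (Set.Ioc (0:ℝ) t) := by
    exact (Continuous.integrableOn_Ioc (by fun_prop))
  have hout0 : ∀ᵐ s ∂(volume.restrict (Set.Ioc (0:ℝ) t)),
      0 ≤ ∫ y : ℝ, Real.exp (-(|x - y| + (t - s)) / D) * (1 + s) ^ (-β)
        * (1 + (y - lam * s) ^ 2 / (1 + s)) ^ (-γ) := by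
    filter_upwards [ae_restrict_mem measurableSet_Ioc] with s hs
    obtain ⟨hs0', hst⟩ := hs
    have hP : (0:ℝ) < 1 + s := by linarith
    refine integral_nonneg fun y => ?_
    have hBy : (0:ℝ) < 1 + (y - lam*s)^2/(1+s) := by
      have := div_nonneg (sq_nonneg (y - lam*s)) hP.le
      linarith
    exact mul_nonneg (mul_nonneg (Real.exp_nonneg _) (Real.rpow_nonneg hP.le _))
      (Real.rpow_nonneg hBy.le _)
  have houtle : ∀ᵐ s ∂(volume.restrict (Set.Ioc (0:ℝ) t)),
      (∫ y : ℝ, Real.exp (-(|x - y| + (t - s)) / D) * (1 + s) ^ (-β)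
        * (1 + (y - lam * s) ^ 2 / (1 + s)) ^ (-γ))
      ≤ Cb * Q * Real.exp (-(t-s)/(2*D)) := by
    filter_upwards [ae_restrict_mem measurableSet_Ioc] with s hs
    exact key s hs
  calc (∫ s in Set.Ioc (0:ℝ) t, ∫ y : ℝ,
        Real.exp (-(|x - y| + (t - s)) / D) * (1 + s) ^ (-β)
          * (1 + (y - lam * s) ^ 2 / (1 + s)) ^ (-γ))
      ≤ ∫ s in Set.Ioc (0:ℝ) t, Cb * Q * Real.exp (-(t-s)/(2*D)) :=
        integral_mono_of_nonneg hout0 hgout houtle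
    _ = Cb * Q * ∫ s in Set.Ioc (0:ℝ) t, Real.exp (-(t-s)/(2*D)) := by
        rw [integral_const_mul]
    _ ≤ Cb * Q * (2*D) := by
        exact mul_le_mul_of_nonneg_left hIoc (mul_nonneg hCb0 hQ0)
    _ = 2*D * ((A+1) * (2^γ*K₁) * (2^γ*K₂)) * (1 + t) ^ (-β)
          * (1 + (x - lam * t) ^ 2 / (1 + t)) ^ (-γ) := by
        rw [hCb, hQ]; ring
end

section
/- Let F : ℝ₊ × ℝ × ℝ³ → ℝ satisfy sup_v (1+|v|)^{β-1} |F(s,x,v)| ≤ C₁ (1+s)^{-α} B_γ(s, x - λ s) for constants α, γ ≥ 0, λ ∈ ℝ, where B_γ(s,z) = (1 + |z|²/(1+s))^{-γ}. Let ν(v) ≥ ν₀(1+|v|) and S^t g(x,v) = e^{-ν(v)t} g(x - v₁ t, v). Then there exists C > 0 such that sup_v (1+|v|)^β |∫₀^t S^{t-s} F(s,·,·) ds (x,v)| ≤ C (1+t)^{-α} B_γ(t, x - λ t) for all t ≥ 0 and x ∈ ℝ. -/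
open MeasureTheory Real

private lemma one_add_le_inv_mul_exp {δ u : ℝ} (hδ0 : 0 < δ) (hδ1 : δ ≤ 1) (hu : 0 ≤ u) :
    1 + u ≤ δ⁻¹ * Real.exp (δ * u) := by
  have h := Real.add_one_le_exp (δ * u)
  have hδ : (0:ℝ) < δ⁻¹ := by positivity
  rw [← sub_nonneg]
  have h2 := mul_le_mul_of_nonneg_left h (le_of_lt hδ)
  have h3 : δ * δ⁻¹ = 1 := mul_inv_cancel₀ (ne_of_gt hδ0)
  nlinarith

private lemma poly_le_exp (ν₀ α γ L : ℝ) (hν₀ : 0 < ν₀) (hα : 0 ≤ α) (hγ : 0 ≤ γ)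
    (hL : 0 ≤ L) :
    ∃ A > 0, ∀ u ≥ (0:ℝ), (1 + u) ^ α * (1 + (L * u) ^ 2) ^ γ ≤ A * Real.exp (ν₀ / 2 * u) := by
  set m : ℝ := α + 2 * γ * L with hm
  have hm0 : 0 ≤ m := by positivity
  set δ : ℝ := min 1 (ν₀ / (2 * m + 2)) with hδdef
  have hδ0 : 0 < δ := lt_min one_pos (by positivity)
  have hδ1 : δ ≤ 1 := min_le_left _ _
  have hδ2 : m * δ ≤ ν₀ / 2 := by
    have h1 : δ ≤ ν₀ / (2 * m + 2) := min_le_right _ _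
    have h2 : m * δ ≤ m * (ν₀ / (2 * m + 2)) := by
      apply mul_le_mul_of_nonneg_left h1 hm0
    refine h2.trans ?_
    rw [mul_div_assoc'] at *
    rw [div_le_div_iff₀ (by positivity) two_pos]
    nlinarith
  refine ⟨δ⁻¹ ^ (α + 2 * γ), by positivity, fun u hu => ?_⟩
  have h1 : 1 + u ≤ δ⁻¹ * Real.exp (δ * u) := one_add_le_inv_mul_exp hδ0 hδ1 hu
  have h2 : 1 + L * u ≤ δ⁻¹ * Real.exp (δ * (L * u)) :=
    one_add_le_inv_mul_exp hδ0 hδ1 (by positivity)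
  have e1 : (1 + u) ^ α ≤ δ⁻¹ ^ α * Real.exp (α * δ * u) := by
    calc (1 + u) ^ α ≤ (δ⁻¹ * Real.exp (δ * u)) ^ α :=
          Real.rpow_le_rpow (by positivity) h1 hα
      _ = δ⁻¹ ^ α * Real.exp (α * δ * u) := by
          rw [Real.mul_rpow (by positivity) (le_of_lt (Real.exp_pos _)),
            ← Real.exp_mul]
          ring_nf
  have e2 : (1 + (L * u) ^ 2) ^ γ ≤ δ⁻¹ ^ (2 * γ) * Real.exp (2 * γ * δ * (L * u)) := by
    have hsq : 1 + (L * u) ^ 2 ≤ (1 + L * u) ^ 2 := by nlinarith [mul_nonneg hL hu]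
    calc (1 + (L * u) ^ 2) ^ γ ≤ ((1 + L * u) ^ 2) ^ γ :=
          Real.rpow_le_rpow (by positivity) hsq hγ
      _ = (1 + L * u) ^ (2 * γ) := by
          rw [← Real.rpow_natCast (1 + L * u) 2, ← Real.rpow_mul (by positivity)]
          norm_num
      _ ≤ (δ⁻¹ * Real.exp (δ * (L * u))) ^ (2 * γ) :=
          Real.rpow_le_rpow (by positivity) h2 (by positivity)
      _ = δ⁻¹ ^ (2 * γ) * Real.exp (2 * γ * δ * (L * u)) := by
          rw [Real.mul_rpow (by positivity) (le_of_lt (Real.exp_pos _)),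
            ← Real.exp_mul]
          ring_nf
  calc (1 + u) ^ α * (1 + (L * u) ^ 2) ^ γ
      ≤ (δ⁻¹ ^ α * Real.exp (α * δ * u)) * (δ⁻¹ ^ (2 * γ) * Real.exp (2 * γ * δ * (L * u))) := by
        apply mul_le_mul e1 e2 (by positivity) (by positivity)
    _ = δ⁻¹ ^ (α + 2 * γ) * Real.exp (m * δ * u) := by
        rw [Real.rpow_add (by positivity : (0:ℝ) < δ⁻¹) α (2*γ),
          show m * δ * u = α * δ * u + 2 * γ * δ * (L * u) from by rw [hm]; ring,
          Real.exp_add]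
        ring
    _ ≤ δ⁻¹ ^ (α + 2 * γ) * Real.exp (ν₀ / 2 * u) := by
        apply mul_le_mul_of_nonneg_left _ (by positivity)
        apply Real.exp_le_exp.2
        apply mul_le_mul_of_nonneg_right hδ2 hu

private lemma exp_integral_eq {c t : ℝ} (hc : 0 < c) :
    (∫ s in (0:ℝ)..t, c * Real.exp (-(c * (t - s)))) = 1 - Real.exp (-(c * t)) := by
  have hderiv : ∀ s ∈ Set.uIcc (0:ℝ) t,
      HasDerivAt (fun s => Real.exp (c * s - c * t)) (c * Real.exp (-(c * (t - s)))) s := by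
    intro s _
    have h1 : HasDerivAt (fun s : ℝ => c * s - c * t) c s := by
      simpa using ((hasDerivAt_id s).const_mul c).sub_const (c * t)
    have := h1.exp
    convert this using 1
    rw [show -(c * (t - s)) = c * s - c * t from by ring]
    ring
  rw [intervalIntegral.integral_eq_sub_of_hasDerivAt hderiv
    (Continuous.intervalIntegrable (by continuity) _ _)]
  rw [show c * t - c * t = 0 from by ring, show c * 0 - c * t = -(c*t) from by ring]
  rw [Real.exp_zero]

private lemma sq_sub_le (a b : ℝ) : (a - b) ^ 2 ≤ 2 * a ^ 2 + 2 * b ^ 2 := by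
  nlinarith [sq_nonneg (a + b)]

set_option maxHeartbeats 1000000 in
private lemma pointwise_bound (C₁ α γ ν₀ lam A β : ℝ) (hα : 0 ≤ α) (hγ : 0 ≤ γ)
    (hν₀ : 0 < ν₀)
    (hA : ∀ u ≥ (0:ℝ), (1 + u) ^ α * (1 + ((1 + |lam|) * u) ^ 2) ^ γ ≤ A * Real.exp (ν₀ / 2 * u))
    (t s x V v0 νv Fv : ℝ) (hs0 : 0 ≤ s) (hst : s ≤ t) (hV : 0 ≤ V) (hv0 : |v0| ≤ V)
    (hνv : ν₀ * (1 + V) ≤ νv) (hC₁ : 0 ≤ C₁)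
    (hFb : (1 + V) ^ (β - 1) * |Fv|
      ≤ C₁ * (1 + s) ^ (-α) * (1 + (x - v0 * (t - s) - lam * s) ^ 2 / (1 + s)) ^ (-γ)) :
    (1 + V) ^ β * |Real.exp (-νv * (t - s)) * Fv|
      ≤ C₁ * 2 ^ γ * A * (1 + t) ^ (-α) * (1 + (x - lam * t) ^ 2 / (1 + t)) ^ (-γ)
        * ((1 + V) * Real.exp (-(ν₀ / 2 * (1 + V) * (t - s)))) := by
  have hVpos : (0:ℝ) < 1 + V := by linarith
  set τ : ℝ := t - s with hτdef
  have hτ : 0 ≤ τ := by simp [hτdef]; linarith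
  have h1s : (0:ℝ) < 1 + s := by linarith
  have h1t : (0:ℝ) < 1 + t := by linarith
  have hstt : (1:ℝ) + s ≤ 1 + t := by linarith
  set u : ℝ := (1 + V) * τ with hudef
  have hu : 0 ≤ u := by positivity
  set w : ℝ := x - v0 * τ - lam * s with hwdef
  set z : ℝ := x - lam * t with hzdef
  set Q : ℝ := 1 + w ^ 2 / (1 + s) with hQdef
  set P : ℝ := 1 + z ^ 2 / (1 + t) with hPdef
  set D : ℝ := 1 + ((1 + |lam|) * u) ^ 2 with hDdef
  clear_value τ u w z Q P D
  have hQp : 0 < Q := by rw [hQdef]; positivity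
  have hPp : 0 < P := by rw [hPdef]; positivity
  have hDp : 0 < D := by rw [hDdef]; positivity
  -- decay of exponential
  have hexp : Real.exp (-νv * τ) ≤ Real.exp (-(ν₀ * (1 + V)) * τ) := by
    apply Real.exp_le_exp.2
    nlinarith [mul_nonneg (sub_nonneg.2 hνv) hτ]
  -- bound on |Fv|
  have hFb' : |Fv| ≤ (1 + V) ^ (1 - β) * (C₁ * (1 + s) ^ (-α) * Q ^ (-γ)) := by
    have hid : (1 + V) ^ (1 - β) * (1 + V) ^ (β - 1) = 1 := by
      rw [← Real.rpow_add hVpos]; norm_num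
    calc |Fv| = (1 + V) ^ (1 - β) * ((1 + V) ^ (β - 1) * |Fv|) := by
          rw [← mul_assoc, hid, one_mul]
      _ ≤ (1 + V) ^ (1 - β) * (C₁ * (1 + s) ^ (-α) * Q ^ (-γ)) :=
          mul_le_mul_of_nonneg_left hFb (by positivity)
  -- time-decay transfer
  have htime : (1 + s) ^ (-α) ≤ (1 + t) ^ (-α) * (1 + τ) ^ α := by
    have hprod : (1 + t) ≤ (1 + s) * (1 + τ) := by nlinarith [mul_nonneg hs0 hτ]
    have h1 : (1 + t) ^ α ≤ (1 + s) ^ α * (1 + τ) ^ α := by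
      rw [← Real.mul_rpow (le_of_lt h1s) (by linarith)]
      exact Real.rpow_le_rpow (le_of_lt h1t) hprod hα
    rw [Real.rpow_neg (le_of_lt h1s), Real.rpow_neg (le_of_lt h1t)]
    have hsa : (0:ℝ) < (1 + s) ^ α := Real.rpow_pos_of_pos h1s α
    have hta : (0:ℝ) < (1 + t) ^ α := Real.rpow_pos_of_pos h1t α
    calc ((1 + s) ^ α)⁻¹ = (1 + t) ^ α * (((1 + s) ^ α)⁻¹ * ((1 + t) ^ α)⁻¹) := by
          field_simp
      _ ≤ ((1 + s) ^ α * (1 + τ) ^ α) * (((1 + s) ^ α)⁻¹ * ((1 + t) ^ α)⁻¹) :=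
          mul_le_mul_of_nonneg_right h1 (by positivity)
      _ = ((1 + t) ^ α)⁻¹ * (1 + τ) ^ α := by field_simp
  -- wave-profile transfer
  have hPQD : P ≤ 2 * Q * D := by
    have hz2 : z ^ 2 ≤ 2 * w ^ 2 + 2 * ((lam - v0) * τ) ^ 2 := by
      have hz' : z = w - (lam - v0) * τ := by rw [hzdef, hwdef, hτdef]; ring
      rw [hz']; exact sq_sub_le _ _
    have hE : ((lam - v0) * τ) ^ 2 ≤ ((1 + |lam|) * u) ^ 2 := by
      have h' : |lam - v0| ≤ (1 + |lam|) * (1 + V) := by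
        have := abs_sub lam v0
        nlinarith [abs_nonneg lam, abs_nonneg v0, hv0]
      have h'' : (lam - v0) ^ 2 ≤ ((1 + |lam|) * (1 + V)) ^ 2 := by
        nlinarith [abs_nonneg (lam - v0), sq_abs (lam - v0)]
      calc ((lam - v0) * τ) ^ 2 = (lam - v0) ^ 2 * τ ^ 2 := by ring
        _ ≤ ((1 + |lam|) * (1 + V)) ^ 2 * τ ^ 2 :=
            mul_le_mul_of_nonneg_right h'' (sq_nonneg τ)
        _ = ((1 + |lam|) * u) ^ 2 := by rw [hudef]; ring
    have key1 : z ^ 2 / (1 + t) ≤ 2 * (w ^ 2 / (1 + s)) + 2 * ((lam - v0) * τ) ^ 2 := by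
      have s1 : z ^ 2 / (1 + t) ≤ (2 * w ^ 2 + 2 * ((lam - v0) * τ) ^ 2) / (1 + t) := by
        gcongr
      have s2 : w ^ 2 / (1 + t) ≤ w ^ 2 / (1 + s) := by gcongr
      have s3 : ((lam - v0) * τ) ^ 2 / (1 + t) ≤ ((lam - v0) * τ) ^ 2 :=
        div_le_self (sq_nonneg _) (by linarith)
      calc z ^ 2 / (1 + t) ≤ (2 * w ^ 2 + 2 * ((lam - v0) * τ) ^ 2) / (1 + t) := s1
        _ = 2 * (w ^ 2 / (1 + t)) + 2 * (((lam - v0) * τ) ^ 2 / (1 + t)) := by ring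
        _ ≤ 2 * (w ^ 2 / (1 + s)) + 2 * ((lam - v0) * τ) ^ 2 := by linarith
    have hq : 0 ≤ w ^ 2 / (1 + s) := by positivity
    have hd : 0 ≤ ((1 + |lam|) * u) ^ 2 := sq_nonneg _
    rw [hPdef, hQdef, hDdef]
    nlinarith [mul_nonneg hq hd]
  have hQbound : Q ^ (-γ) ≤ 2 ^ γ * D ^ γ * P ^ (-γ) := by
    have h1 : P ^ γ ≤ (2 * Q * D) ^ γ := Real.rpow_le_rpow (le_of_lt hPp) hPQD hγ
    have h2 : (2 * Q * D) ^ γ = 2 ^ γ * Q ^ γ * D ^ γ := by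
      rw [Real.mul_rpow (by positivity) (le_of_lt hDp),
        Real.mul_rpow (by norm_num) (le_of_lt hQp)]
    have h3 : P ^ γ ≤ 2 ^ γ * Q ^ γ * D ^ γ := h2 ▸ h1
    have hQγ : (0:ℝ) < Q ^ γ := Real.rpow_pos_of_pos hQp γ
    have hPγ : (0:ℝ) < P ^ γ := Real.rpow_pos_of_pos hPp γ
    rw [Real.rpow_neg (le_of_lt hQp), Real.rpow_neg (le_of_lt hPp)]
    calc (Q ^ γ)⁻¹ = P ^ γ * ((Q ^ γ)⁻¹ * (P ^ γ)⁻¹) := by field_simp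
      _ ≤ (2 ^ γ * Q ^ γ * D ^ γ) * ((Q ^ γ)⁻¹ * (P ^ γ)⁻¹) :=
          mul_le_mul_of_nonneg_right h3 (by positivity)
      _ = 2 ^ γ * D ^ γ * (P ^ γ)⁻¹ := by field_simp
  have hτu : (1 + τ) ^ α ≤ (1 + u) ^ α := by
    apply Real.rpow_le_rpow (by linarith) _ hα
    have : τ ≤ u := by rw [hudef]; nlinarith
    linarith
  -- assemble
  calc (1 + V) ^ β * |Real.exp (-νv * τ) * Fv|
      = (1 + V) ^ β * (Real.exp (-νv * τ) * |Fv|) := by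
        rw [abs_mul, Real.abs_exp]
    _ ≤ (1 + V) ^ β * (Real.exp (-(ν₀ * (1 + V)) * τ)
          * ((1 + V) ^ (1 - β) * (C₁ * (1 + s) ^ (-α) * Q ^ (-γ)))) := by
        apply mul_le_mul_of_nonneg_left _ (by positivity)
        exact mul_le_mul hexp hFb' (abs_nonneg _) (by positivity)
    _ = C₁ * ((1 + V) ^ β * (1 + V) ^ (1 - β)) * Real.exp (-(ν₀ * (1 + V)) * τ)
          * (1 + s) ^ (-α) * Q ^ (-γ) := by ring
    _ = C₁ * (1 + V) * Real.exp (-(ν₀ * (1 + V)) * τ) * (1 + s) ^ (-α) * Q ^ (-γ) := by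
        rw [← Real.rpow_add hVpos]; norm_num
    _ ≤ C₁ * (1 + V) * Real.exp (-(ν₀ * (1 + V)) * τ)
          * ((1 + t) ^ (-α) * (1 + τ) ^ α) * (2 ^ γ * D ^ γ * P ^ (-γ)) := by
        have hnn : (0:ℝ) ≤ C₁ * (1 + V) * Real.exp (-(ν₀ * (1 + V)) * τ) := by positivity
        have := mul_le_mul htime hQbound (Real.rpow_nonneg (by positivity) _) (by positivity)
        calc C₁ * (1 + V) * Real.exp (-(ν₀ * (1 + V)) * τ) * (1 + s) ^ (-α) * Q ^ (-γ)
            = (C₁ * (1 + V) * Real.exp (-(ν₀ * (1 + V)) * τ)) * ((1 + s) ^ (-α) * Q ^ (-γ)) := by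
              ring
          _ ≤ (C₁ * (1 + V) * Real.exp (-(ν₀ * (1 + V)) * τ))
              * (((1 + t) ^ (-α) * (1 + τ) ^ α) * (2 ^ γ * D ^ γ * P ^ (-γ))) :=
              mul_le_mul_of_nonneg_left this hnn
          _ = C₁ * (1 + V) * Real.exp (-(ν₀ * (1 + V)) * τ)
              * ((1 + t) ^ (-α) * (1 + τ) ^ α) * (2 ^ γ * D ^ γ * P ^ (-γ)) := by ring
    _ = C₁ * 2 ^ γ * (1 + t) ^ (-α) * P ^ (-γ)
          * ((1 + V) * Real.exp (-(ν₀ * (1 + V)) * τ) * ((1 + τ) ^ α * D ^ γ)) := by ring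
    _ ≤ C₁ * 2 ^ γ * (1 + t) ^ (-α) * P ^ (-γ)
          * ((1 + V) * Real.exp (-(ν₀ * (1 + V)) * τ) * ((1 + u) ^ α * D ^ γ)) := by
        apply mul_le_mul_of_nonneg_left _ (by positivity)
        apply mul_le_mul_of_nonneg_left _ (by positivity)
        exact mul_le_mul_of_nonneg_right hτu (Real.rpow_nonneg (le_of_lt hDp) γ)
    _ ≤ C₁ * 2 ^ γ * (1 + t) ^ (-α) * P ^ (-γ)
          * ((1 + V) * Real.exp (-(ν₀ * (1 + V)) * τ) * (A * Real.exp (ν₀ / 2 * u))) := by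
        apply mul_le_mul_of_nonneg_left _ (by positivity)
        apply mul_le_mul_of_nonneg_left _ (by positivity)
        rw [hDdef]; exact hA u hu
    _ = C₁ * 2 ^ γ * A * (1 + t) ^ (-α) * P ^ (-γ)
          * ((1 + V) * Real.exp (-(ν₀ / 2 * (1 + V) * τ))) := by
        have hee : Real.exp (-(ν₀ * (1 + V)) * τ) * Real.exp (ν₀ / 2 * u)
            = Real.exp (-(ν₀ / 2 * (1 + V) * τ)) := by
          rw [← Real.exp_add]; congr 1; rw [hudef]; ring
        rw [← hee]; ring


theorem stmt10 (ν : EuclideanSpace ℝ (Fin 3) → ℝ) (ν₀ : ℝ) (hν₀ : 0 < ν₀)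
    (hν : ∀ v, ν₀ * (1 + ‖v‖) ≤ ν v)
    (F : ℝ → ℝ → EuclideanSpace ℝ (Fin 3) → ℝ)
    (α γ lam β C₁ : ℝ) (hα : 0 ≤ α) (hγ : 0 ≤ γ) (hC₁ : 0 < C₁)
    (hF : ∀ s ≥ (0:ℝ), ∀ x : ℝ, ∀ v,
      (1 + ‖v‖) ^ (β - 1) * |F s x v|
        ≤ C₁ * (1 + s) ^ (-α) * (1 + (x - lam * s) ^ 2 / (1 + s)) ^ (-γ)) :
    ∃ C > (0:ℝ), ∀ t ≥ (0:ℝ), ∀ x : ℝ, ∀ v,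
      (1 + ‖v‖) ^ β
          * |∫ s in (0:ℝ)..t, Real.exp (-ν v * (t - s)) * F s (x - v 0 * (t - s)) v|
        ≤ C * (1 + t) ^ (-α) * (1 + (x - lam * t) ^ 2 / (1 + t)) ^ (-γ) := by
  have hv0le : ∀ v : EuclideanSpace ℝ (Fin 3), |v 0| ≤ ‖v‖ := by
    intro v
    have h1 : ‖v 0‖ ^ 2 ≤ ∑ i, ‖v i‖ ^ 2 :=
      Finset.single_le_sum (f := fun i => ‖v i‖ ^ 2) (fun i _ => sq_nonneg _)
        (Finset.mem_univ 0)
    calc |v 0| = Real.sqrt (‖v 0‖ ^ 2) := by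
          rw [Real.norm_eq_abs, Real.sqrt_sq_eq_abs, abs_abs]
      _ ≤ Real.sqrt (∑ i, ‖v i‖ ^ 2) := Real.sqrt_le_sqrt h1
      _ = ‖v‖ := (EuclideanSpace.norm_eq v).symm
  obtain ⟨A, hA0, hAe⟩ := poly_le_exp ν₀ α γ (1 + |lam|) hν₀ hα hγ (by positivity)
  have hν₀' : ν₀ ≠ 0 := ne_of_gt hν₀
  refine ⟨C₁ * 2 ^ γ * A * (2 / ν₀), by positivity, fun t ht x v => ?_⟩
  set V : ℝ := ‖v‖ with hVdef
  have hV : 0 ≤ V := by rw [hVdef]; exact norm_nonneg v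
  have hVpos : (0:ℝ) < 1 + V := by linarith
  have hVb : (0:ℝ) < (1 + V) ^ β := Real.rpow_pos_of_pos hVpos β
  have hc : 0 < ν₀ / 2 * (1 + V) := by positivity
  set Cst : ℝ := ((1 + V) ^ β)⁻¹ * (C₁ * 2 ^ γ * A * (2 / ν₀) * (1 + t) ^ (-α)
      * (1 + (x - lam * t) ^ 2 / (1 + t)) ^ (-γ)) with hCst
  have hCst0 : 0 ≤ Cst := by rw [hCst]; positivity
  have key : ∀ s ∈ Set.uIoc (0:ℝ) t,
      ‖Real.exp (-ν v * (t - s)) * F s (x - v 0 * (t - s)) v‖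
        ≤ Cst * (ν₀ / 2 * (1 + V) * Real.exp (-(ν₀ / 2 * (1 + V) * (t - s)))) := by
    intro s hs
    rw [Set.uIoc_of_le ht] at hs
    have hFb := hF s (le_of_lt hs.1) (x - v 0 * (t - s)) v
    rw [← hVdef] at hFb
    have hv0 : |v 0| ≤ V := by rw [hVdef]; exact hv0le v
    have hνv : ν₀ * (1 + V) ≤ ν v := by rw [hVdef]; exact hν v
    have hpb := pointwise_bound C₁ α γ ν₀ lam A β hα hγ hν₀ hAe t s x V (v 0) (ν v)
      (F s (x - v 0 * (t - s)) v) (le_of_lt hs.1) hs.2 hV hv0 hνv (le_of_lt hC₁) hFb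
    have hdiv := mul_le_mul_of_nonneg_left hpb (inv_nonneg.2 (le_of_lt hVb))
    rw [← mul_assoc, inv_mul_cancel₀ (ne_of_gt hVb), one_mul] at hdiv
    rw [Real.norm_eq_abs]
    refine hdiv.trans (le_of_eq ?_)
    rw [hCst]
    field_simp
  have hInt : IntervalIntegrable
      (fun s => Cst * (ν₀ / 2 * (1 + V) * Real.exp (-(ν₀ / 2 * (1 + V) * (t - s)))))
      volume 0 t := by
    apply Continuous.intervalIntegrable
    fun_prop
  have hbig := intervalIntegral.norm_integral_le_abs_of_norm_le (μ := volume)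
    ((ae_restrict_mem measurableSet_uIoc).mono fun s hs => key s hs) hInt
  have hg : (∫ s in (0:ℝ)..t,
      Cst * (ν₀ / 2 * (1 + V) * Real.exp (-(ν₀ / 2 * (1 + V) * (t - s)))))
      = Cst * (1 - Real.exp (-(ν₀ / 2 * (1 + V) * t))) := by
    rw [intervalIntegral.integral_const_mul, exp_integral_eq hc]
  have habs : |1 - Real.exp (-(ν₀ / 2 * (1 + V) * t))| ≤ 1 := by
    have h1 : 0 < Real.exp (-(ν₀ / 2 * (1 + V) * t)) := Real.exp_pos _
    have h2 : Real.exp (-(ν₀ / 2 * (1 + V) * t)) ≤ 1 := by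
      have h3 : Real.exp (-(ν₀ / 2 * (1 + V) * t)) ≤ Real.exp 0 :=
        Real.exp_le_exp.2 (by nlinarith)
      simpa using h3
    rw [abs_of_nonneg (by linarith)]
    linarith
  calc (1 + V) ^ β
        * |∫ s in (0:ℝ)..t, Real.exp (-ν v * (t - s)) * F s (x - v 0 * (t - s)) v|
      ≤ (1 + V) ^ β * |Cst * (1 - Real.exp (-(ν₀ / 2 * (1 + V) * t)))| := by
        apply mul_le_mul_of_nonneg_left _ (le_of_lt hVb)
        rw [← Real.norm_eq_abs, ← hg]
        exact hbig
    _ = (1 + V) ^ β * (Cst * |1 - Real.exp (-(ν₀ / 2 * (1 + V) * t))|) := by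
        rw [abs_mul, abs_of_nonneg hCst0]
    _ ≤ (1 + V) ^ β * (Cst * 1) := by
        apply mul_le_mul_of_nonneg_left _ (le_of_lt hVb)
        exact mul_le_mul_of_nonneg_left habs hCst0
    _ = C₁ * 2 ^ γ * A * (2 / ν₀) * (1 + t) ^ (-α)
          * (1 + (x - lam * t) ^ 2 / (1 + t)) ^ (-γ) := by
        rw [mul_one, hCst, ← mul_assoc, mul_inv_cancel₀ (ne_of_gt hVb), one_mul]
end

section
/- Let λ = μ ∈ ℝ, D > 0, α ≥ 0, β ≥ 1, γ > 1/2. Then there is C > 0 such that for all t ≥ 0 and x ∈ ℝ, ∫₀^{t/2} ∫_ℝ (1+t-s)^{-α} e^{-|x-y-λ(t-s)|²/(D(1+t-s))} (1+s)^{-β} B_γ(s, y - λ s) dy ds ≤ C (1+t)^{-α} B_γ(t, x - λ t) T^{β - 1/2}(t), where T^k(t) = ∫₀^t (1+s)^{-k} ds and B_γ(s,z) = (1+|z|²/(1+s))^{-γ}. -/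
open MeasureTheory Real Filter

-- L1: base integrability
lemma L1 {γ : ℝ} (hγ : 1/2 < γ) : Integrable (fun u : ℝ => (1 + u^2) ^ (-γ)) := by
  have h := integrable_rpow_neg_one_add_norm_sq (E := ℝ) (μ := volume) (r := 2*γ) (by simpa using by linarith)
  have : (fun u : ℝ => (1 + u^2) ^ (-γ)) = fun x : ℝ => ((1:ℝ) + ‖x‖^2) ^ (-(2*γ)/2) := by
    funext x
    rw [Real.norm_eq_abs, sq_abs]
    ring_nf
  rw [this]; exact h

-- L2: scaled integrability and value
lemma L2 {γ a : ℝ} (hγ : 1/2 < γ) (ha : 0 < a) :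
    Integrable (fun w : ℝ => (1 + w^2/a) ^ (-γ)) ∧
    (∫ w : ℝ, (1 + w^2/a) ^ (-γ)) = Real.sqrt a * ∫ u : ℝ, (1 + u^2) ^ (-γ) := by
  have hsa : (0:ℝ) < Real.sqrt a := Real.sqrt_pos.mpr ha
  have hkey : (fun w : ℝ => (1 + w^2/a) ^ (-γ))
      = fun w : ℝ => (1 + ((Real.sqrt a)⁻¹ * w)^2) ^ (-γ) := by
    funext w
    rw [mul_pow, inv_pow, sq_sqrt ha.le]
    rw [div_eq_inv_mul]
  constructor
  · rw [hkey]
    exact (L1 hγ).comp_mul_left' (by positivity)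
  · rw [hkey, MeasureTheory.Measure.integral_comp_mul_left (fun u : ℝ => (1+u^2)^(-γ)) (Real.sqrt a)⁻¹]
    rw [inv_inv, abs_of_pos hsa, smul_eq_mul]

-- L3: exponential decay beats polynomial
lemma L3 {d : ℝ} (hd : 0 < d) (γ : ℝ) :
    ∃ C > (0:ℝ), ∀ u : ℝ, 0 ≤ u → Real.exp (-(u/d)) ≤ C * (1+u) ^ (-γ) := by
  obtain ⟨n, hn⟩ := exists_nat_ge γ
  set ε : ℝ := (max 1 (n*d))⁻¹ with hε
  have hmax : (0:ℝ) < max 1 (n*d) := lt_max_of_lt_left one_pos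
  have hε0 : 0 < ε := by positivity
  have hε1 : ε ≤ 1 := by
    rw [hε]
    exact inv_le_one_of_one_le₀ (le_max_left _ _)
  refine ⟨(max 1 (n*d))^n, by positivity, fun u hu => ?_⟩
  have h1u : (0:ℝ) < 1 + u := by linarith
  -- (1+u)^γ ≤ (1+u)^n
  have hA : (1+u) ^ γ ≤ (1+u) ^ (n:ℕ) := by
    rw [← Real.rpow_natCast (1+u) n]
    exact Real.rpow_le_rpow_of_exponent_le (by linarith) hn
  -- 1+u ≤ ε⁻¹ * exp (ε * u)
  have hB : 1 + u ≤ ε⁻¹ * Real.exp (ε * u) := by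
    have h2 : 1 + ε * u ≤ Real.exp (ε * u) := by
      have := Real.add_one_le_exp (ε * u)
      linarith
    have h3 : 1 + u ≤ ε⁻¹ * (1 + ε * u) := by
      rw [mul_add, inv_mul_cancel_left₀ hε0.ne']
      have : (1:ℝ) ≤ ε⁻¹ := (one_le_inv₀ hε0).mpr hε1
      nlinarith [mul_nonneg hε0.le hu]
    calc 1 + u ≤ ε⁻¹ * (1 + ε * u) := h3
      _ ≤ ε⁻¹ * Real.exp (ε * u) := by
          apply mul_le_mul_of_nonneg_left h2 (by positivity)
  -- (1+u)^n ≤ (max 1 (nd))^n * exp(u/d)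
  have hC : (1+u) ^ (n:ℕ) ≤ (max 1 (n*d))^n * Real.exp (u/d) := by
    calc (1+u)^(n:ℕ) ≤ (ε⁻¹ * Real.exp (ε * u))^(n:ℕ) := by
          apply pow_le_pow_left₀ h1u.le hB
      _ = (max 1 (n*d))^n * Real.exp (ε * u)^(n:ℕ) := by
          rw [mul_pow, hε, inv_inv]
      _ = (max 1 (n*d))^n * Real.exp ((n:ℝ) * (ε * u)) := by
          rw [← Real.exp_nat_mul]
      _ ≤ (max 1 (n*d))^n * Real.exp (u/d) := by
          apply mul_le_mul_of_nonneg_left _ (by positivity)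
          apply Real.exp_le_exp.mpr
          rw [div_eq_mul_inv, hε]
          rcases Nat.eq_zero_or_pos n with h0 | hpos
          · simp [h0]
            positivity
          · have hnd : (0:ℝ) < n * d := by positivity
            have : (max 1 (n*d))⁻¹ ≤ (n*d)⁻¹ := by
              apply inv_anti₀ hnd (le_max_right _ _)
            calc (n:ℝ) * ((max 1 (n*d))⁻¹ * u) ≤ (n:ℝ) * ((n*d)⁻¹ * u) := by
                  apply mul_le_mul_of_nonneg_left _ (Nat.cast_nonneg n)
                  exact mul_le_mul_of_nonneg_right this hu
              _ = u * d⁻¹ := by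
                  field_simp
  -- conclude
  have hpow : (1+u) ^ γ ≤ (max 1 (n*d))^n * Real.exp (u/d) := le_trans hA hC
  have hexp : (0:ℝ) < Real.exp (u/d) := Real.exp_pos _
  have hr : (0:ℝ) < (1+u) ^ γ := Real.rpow_pos_of_pos h1u γ
  rw [Real.rpow_neg h1u.le, Real.exp_neg, inv_eq_one_div, ← div_eq_mul_inv,
    div_le_div_iff₀ hexp hr, one_mul]
  exact hpow

set_option maxHeartbeats 2000000
-- L4: inner convolution bound
lemma L4 {D γ : ℝ} (hD : 0 < D) (hγ : 1/2 < γ) :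
    ∃ K > (0:ℝ), ∀ τ a m z : ℝ, 1 ≤ a → a ≤ τ → τ ≤ 2*m → m ≤ τ →
      (∫ w : ℝ, Real.exp (-(z-w)^2 / (D*m)) * (1 + w^2/a) ^ (-γ))
        ≤ K * Real.sqrt a * (1 + z^2/τ) ^ (-γ) := by
  obtain ⟨C', hC'pos, hC'⟩ := L3 (mul_pos four_pos hD) γ
  set cγ : ℝ := ∫ u : ℝ, (1 + u^2) ^ (-γ) with hcγdef
  have hcγ : 0 ≤ cγ := integral_nonneg fun u => Real.rpow_nonneg (by positivity) _
  have hπD : (0:ℝ) < π * D := by positivity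
  set K : ℝ := 2^γ * cγ + 8^γ * Real.sqrt (π*D) + C' * cγ with hKdef
  have hK : 0 < K := by
    have h8 : (0:ℝ) < 8^γ * Real.sqrt (π*D) := by positivity
    have h2 : (0:ℝ) ≤ 2^γ * cγ := by positivity
    have h3 : (0:ℝ) ≤ C' * cγ := by positivity
    linarith
  refine ⟨K, hK, fun τ a m z h1a haτ hτm hmτ => ?_⟩
  have ha : (0:ℝ) < a := lt_of_lt_of_le one_pos h1a
  have hτ : (0:ℝ) < τ := lt_of_lt_of_le ha haτ
  have hm : (0:ℝ) < m := by linarith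
  have hDm : (0:ℝ) < D * m := by positivity
  set B : ℝ := (1 + z^2/τ) ^ (-γ) with hBdef
  have hBpos : 0 < B := Real.rpow_pos_of_pos (by positivity) _
  set sa : ℝ := Real.sqrt a with hsadef
  have hsa : 0 < sa := Real.sqrt_pos.mpr ha
  -- Gaussian facts
  have hgfun : (fun w : ℝ => Real.exp (-(z-w)^2 / (D*m)))
      = fun w : ℝ => (fun u : ℝ => Real.exp (-((D*m)⁻¹) * u^2)) (w - z) := by
    funext w; congr 1; field_simp; ring
  have gInt : Integrable (fun w : ℝ => Real.exp (-(z-w)^2 / (D*m))) := by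
    rw [hgfun]
    exact (integrable_exp_neg_mul_sq (inv_pos.mpr hDm)).comp_sub_right z
  have gVal : (∫ w : ℝ, Real.exp (-(z-w)^2 / (D*m))) = Real.sqrt (π * (D*m)) := by
    rw [hgfun, integral_sub_right_eq_self (fun u : ℝ => Real.exp (-((D*m)⁻¹) * u^2)) z,
      integral_gaussian]
    congr 1
    field_simp
  have algInt : Integrable (fun w : ℝ => (1 + w^2/a) ^ (-γ)) := (L2 hγ ha).1
  have algVal : (∫ w : ℝ, (1 + w^2/a) ^ (-γ)) = sa * cγ := (L2 hγ ha).2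
  have hnonneg : ∀ w : ℝ, 0 ≤ Real.exp (-(z-w)^2 / (D*m)) * (1 + w^2/a) ^ (-γ) :=
    fun w => mul_nonneg (Real.exp_nonneg _) (Real.rpow_nonneg (by positivity) _)
  by_cases hz : z^2 ≤ τ
  · -- Case A
    have hBlow : (2:ℝ)^(-γ) ≤ B := by
      apply Real.rpow_le_rpow_of_nonpos (by positivity) _ (by linarith)
      have : z^2/τ ≤ 1 := (div_le_one hτ).mpr hz
      linarith
    have hIA : (∫ w : ℝ, Real.exp (-(z-w)^2 / (D*m)) * (1 + w^2/a) ^ (-γ))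
        ≤ ∫ w : ℝ, (1 + w^2/a) ^ (-γ) := by
      apply integral_mono_of_nonneg (Eventually.of_forall hnonneg) algInt
      apply Eventually.of_forall
      intro w
      apply mul_le_of_le_one_left (Real.rpow_nonneg (by positivity) _)
      apply Real.exp_le_one_iff.mpr
      apply div_nonpos_of_nonpos_of_nonneg (neg_nonpos.mpr (sq_nonneg _)) hDm.le
    rw [algVal] at hIA
    have h2B : (1:ℝ) ≤ 2^γ * B := by
      have e2 : (2:ℝ)^γ * 2^(-γ) = 1 := by
        rw [← Real.rpow_add two_pos]; norm_num
      calc (1:ℝ) = 2^γ * 2^(-γ) := e2.symm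
        _ ≤ 2^γ * B := by
            apply mul_le_mul_of_nonneg_left hBlow (by positivity)
    calc (∫ w : ℝ, Real.exp (-(z-w)^2 / (D*m)) * (1 + w^2/a) ^ (-γ)) ≤ sa * cγ := hIA
      _ = cγ * sa * 1 := by ring
      _ ≤ cγ * sa * (2^γ * B) := by
          apply mul_le_mul_of_nonneg_left h2B (by positivity)
      _ = (2^γ * cγ) * sa * B := by ring
      _ ≤ K * sa * B := by
          have h1 : (0:ℝ) ≤ (8^γ * Real.sqrt (π*D) + C' * cγ) * sa * B := by positivity
          have hKe : K * sa * B = (2^γ*cγ)*sa*B + (8^γ * Real.sqrt (π*D) + C' * cγ)*sa*B := by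
            rw [hKdef]; ring
          linarith
  · -- Case B
    push_neg at hz
    have hz2 : (0:ℝ) < z^2 := lt_trans hτ hz
    set A₁ : ℝ := 4^γ * a^γ * (z^2)^(-γ) with hA₁def
    have hA₁pos : 0 < A₁ := by positivity
    have hpt : ∀ w : ℝ, Real.exp (-(z-w)^2 / (D*m)) * (1 + w^2/a) ^ (-γ)
        ≤ A₁ * Real.exp (-(z-w)^2 / (D*m)) + C' * B * (1 + w^2/a) ^ (-γ) := by
      intro w
      by_cases hw : z^2 ≤ 4*w^2
      · have hbase : z^2/(4*a) ≤ 1 + w^2/a := by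
          rw [div_le_iff₀ (by positivity)]
          have hwa : w^2/a * (4*a) = 4*w^2 := by field_simp
          nlinarith [ha]
        have halg : (1 + w^2/a) ^ (-γ) ≤ (z^2/(4*a)) ^ (-γ) :=
          Real.rpow_le_rpow_of_nonpos (by positivity) hbase (by linarith)
        have hA1eq : (z^2/(4*a)) ^ (-γ) = A₁ := by
          rw [Real.div_rpow (sq_nonneg z) (by positivity), Real.rpow_neg (show (0:ℝ) ≤ 4*a by positivity),
            div_inv_eq_mul, Real.mul_rpow (by norm_num) ha.le, hA₁def]
          ring
        have : Real.exp (-(z-w)^2 / (D*m)) * (1 + w^2/a) ^ (-γ)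
            ≤ A₁ * Real.exp (-(z-w)^2 / (D*m)) := by
          rw [mul_comm (A₁) _]
          apply mul_le_mul_of_nonneg_left (le_of_le_of_eq halg hA1eq) (Real.exp_nonneg _)
        have h2 : (0:ℝ) ≤ C' * B * (1 + w^2/a) ^ (-γ) := by positivity
        linarith
      · push_neg at hw
        have h4 : z^2 ≤ 4*(z-w)^2 := by nlinarith [sq_nonneg (z - 2*w)]
        have hexp : Real.exp (-(z-w)^2 / (D*m)) ≤ C' * B := by
          have e1' : z^2/τ/(4*D) ≤ (z-w)^2/(D*m) := by
            have h5 : z^2/(4*(D*τ)) ≤ (4*(z-w)^2)/(4*(D*m)) := by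
              apply div_le_div₀ (by positivity) h4 (by positivity)
              nlinarith [hD]
            have h6 : (4*(z-w)^2)/(4*(D*m)) = (z-w)^2/(D*m) := by
              rw [mul_div_mul_left _ _ (by norm_num : (4:ℝ) ≠ 0)]
            have h7 : z^2/τ/(4*D) = z^2/(4*(D*τ)) := by
              rw [div_div]; ring_nf
            rw [h7]
            linarith [h5, h6.symm.le]
          have e1 : -(z-w)^2/(D*m) ≤ -(z^2/τ/(4*D)) := by
            rw [neg_div]
            exact neg_le_neg e1'
          calc Real.exp (-(z-w)^2 / (D*m)) ≤ Real.exp (-(z^2/τ/(4*D))) := Real.exp_le_exp.mpr e1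
            _ ≤ C' * (1 + z^2/τ) ^ (-γ) := hC' (z^2/τ) (by positivity)
            _ = C' * B := by rw [hBdef]
        have : Real.exp (-(z-w)^2 / (D*m)) * (1 + w^2/a) ^ (-γ)
            ≤ C' * B * (1 + w^2/a) ^ (-γ) :=
          mul_le_mul_of_nonneg_right hexp (Real.rpow_nonneg (by positivity) _)
        have h2 : (0:ℝ) ≤ A₁ * Real.exp (-(z-w)^2 / (D*m)) := by positivity
        linarith
    have hfInt : Integrable (fun w : ℝ => A₁ * Real.exp (-(z-w)^2 / (D*m))
        + C' * B * (1 + w^2/a) ^ (-γ)) := (gInt.const_mul A₁).add (algInt.const_mul (C'*B))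
    have hI : (∫ w : ℝ, Real.exp (-(z-w)^2 / (D*m)) * (1 + w^2/a) ^ (-γ))
        ≤ A₁ * Real.sqrt (π * (D*m)) + C' * B * (sa * cγ) := by
      calc (∫ w : ℝ, Real.exp (-(z-w)^2 / (D*m)) * (1 + w^2/a) ^ (-γ))
          ≤ ∫ w : ℝ, (A₁ * Real.exp (-(z-w)^2 / (D*m)) + C' * B * (1 + w^2/a) ^ (-γ)) := by
            apply integral_mono_of_nonneg (Eventually.of_forall hnonneg) hfInt
              (Eventually.of_forall hpt)
        _ = A₁ * (∫ w : ℝ, Real.exp (-(z-w)^2 / (D*m)))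
            + C' * B * (∫ w : ℝ, (1 + w^2/a) ^ (-γ)) := by
            rw [integral_add (gInt.const_mul A₁) (algInt.const_mul (C'*B)),
              integral_const_mul, integral_const_mul]
        _ = A₁ * Real.sqrt (π * (D*m)) + C' * B * (sa * cγ) := by rw [gVal, algVal]
    -- key1 : (z²)^{-γ} ≤ 2^γ τ^{-γ} B
    have key1 : (z^2)^(-γ) ≤ 2^γ * τ^(-γ) * B := by
      have hb2 : 1 + z^2/τ ≤ 2*(z^2/τ) := by
        have : (1:ℝ) ≤ z^2/τ := (one_le_div hτ).mpr hz.le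
        linarith
      have h5 : (2*(z^2/τ))^(-γ) ≤ B :=
        Real.rpow_le_rpow_of_nonpos (by positivity) hb2 (by linarith)
      have h6 : (2*(z^2/τ))^(-γ) = 2^(-γ) * ((z^2)^(-γ) * τ^γ) := by
        rw [Real.mul_rpow (by norm_num) (by positivity), Real.div_rpow (sq_nonneg z) hτ.le,
          Real.rpow_neg hτ.le, div_inv_eq_mul]
      have e2 : (2:ℝ)^γ * 2^(-γ) = 1 := by rw [← Real.rpow_add two_pos]; norm_num
      have e3 : τ^(-γ) * τ^γ = 1 := by rw [← Real.rpow_add hτ]; norm_num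
      calc (z^2)^(-γ) = (2^γ * 2^(-γ)) * (τ^(-γ) * τ^γ) * (z^2)^(-γ) := by rw [e2, e3]; ring
        _ = (2^γ * τ^(-γ)) * (2^(-γ) * ((z^2)^(-γ) * τ^γ)) := by ring
        _ ≤ (2^γ * τ^(-γ)) * B := by
            apply mul_le_mul_of_nonneg_left (h6 ▸ h5) (by positivity)
        _ = 2^γ * τ^(-γ) * B := by ring
    -- key2 : a^γ * τ^{-γ} * sqrt τ ≤ sa
    have key2 : a^γ * τ^(-γ) * Real.sqrt τ ≤ sa := by
      have hsq : Real.sqrt τ = τ^((1:ℝ)/2) := Real.sqrt_eq_rpow τ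
      have hsqa : sa = a^((1:ℝ)/2) := Real.sqrt_eq_rpow a
      have haγ : a^γ = a^((1:ℝ)/2) * a^(γ - 1/2) := by
        rw [← Real.rpow_add ha]; ring_nf
      have hmono : a^(γ-1/2) ≤ τ^(γ-1/2) := Real.rpow_le_rpow ha.le haτ (by linarith)
      have e4 : τ^(γ-1/2) * (τ^(-γ) * τ^((1:ℝ)/2)) = 1 := by
        rw [← Real.rpow_add hτ, ← Real.rpow_add hτ]; ring_nf; exact Real.rpow_zero τ
      calc a^γ * τ^(-γ) * Real.sqrt τ
          = a^((1:ℝ)/2) * a^(γ-1/2) * (τ^(-γ) * τ^((1:ℝ)/2)) := by rw [haγ, hsq]; ring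
        _ ≤ a^((1:ℝ)/2) * τ^(γ-1/2) * (τ^(-γ) * τ^((1:ℝ)/2)) := by
            apply mul_le_mul_of_nonneg_right _ (by positivity)
            apply mul_le_mul_of_nonneg_left hmono (by positivity)
        _ = a^((1:ℝ)/2) * (τ^(γ-1/2) * (τ^(-γ) * τ^((1:ℝ)/2))) := by ring
        _ = sa := by rw [e4, mul_one, hsqa]
    -- Claim1
    have e8 : (4:ℝ)^γ * 2^γ = 8^γ := by
      rw [← Real.mul_rpow (by norm_num) (by norm_num)]; norm_num
    have claim1 : A₁ * Real.sqrt (π * (D*m)) ≤ 8^γ * Real.sqrt (π*D) * sa * B := by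
      have hsm : Real.sqrt (π*(D*m)) = Real.sqrt (π*D) * Real.sqrt m := by
        rw [show π*(D*m) = (π*D)*m by ring, Real.sqrt_mul hπD.le]
      have hsmτ : Real.sqrt m ≤ Real.sqrt τ := Real.sqrt_le_sqrt hmτ
      calc A₁ * Real.sqrt (π*(D*m))
          = 4^γ * a^γ * (z^2)^(-γ) * (Real.sqrt (π*D) * Real.sqrt m) := by
            rw [hsm, hA₁def]
        _ ≤ 4^γ * a^γ * (2^γ * τ^(-γ) * B) * (Real.sqrt (π*D) * Real.sqrt τ) := by
            apply mul_le_mul _ _ (by positivity) (by positivity)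
            · apply mul_le_mul_of_nonneg_left key1 (by positivity)
            · apply mul_le_mul_of_nonneg_left hsmτ (by positivity)
        _ = (4^γ * 2^γ) * Real.sqrt (π*D) * B * (a^γ * τ^(-γ) * Real.sqrt τ) := by ring
        _ ≤ (4^γ * 2^γ) * Real.sqrt (π*D) * B * sa := by
            apply mul_le_mul_of_nonneg_left key2 (by positivity)
        _ = 8^γ * Real.sqrt (π*D) * sa * B := by rw [e8]; ring
    calc (∫ w : ℝ, Real.exp (-(z-w)^2 / (D*m)) * (1 + w^2/a) ^ (-γ))
        ≤ A₁ * Real.sqrt (π * (D*m)) + C' * B * (sa * cγ) := hI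
      _ ≤ 8^γ * Real.sqrt (π*D) * sa * B + C' * cγ * sa * B := by
          have : C' * B * (sa * cγ) = C' * cγ * sa * B := by ring
          linarith [claim1, this.le]
      _ ≤ K * sa * B := by
          have h0 : (0:ℝ) ≤ 2^γ * cγ * sa * B := by positivity
          have : K * sa * B = 2^γ*cγ*sa*B + 8^γ * Real.sqrt (π*D) * sa * B + C' * cγ * sa * B := by
            rw [hKdef]; ring
          linarith

set_option maxHeartbeats 2000000 in
theorem stmt11 (lam D α β γ : ℝ) (hD : 0 < D) (hα : 0 ≤ α) (hβ : 1 ≤ β)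
    (hγ : 1 / 2 < γ) :
    ∃ C > (0:ℝ), ∀ t ≥ (0:ℝ), ∀ x : ℝ,
      (∫ s in (0:ℝ)..(t / 2), ∫ y : ℝ,
          (1 + t - s) ^ (-α)
            * Real.exp (-(x - y - lam * (t - s)) ^ 2 / (D * (1 + t - s)))
            * (1 + s) ^ (-β) * (1 + (y - lam * s) ^ 2 / (1 + s)) ^ (-γ))
        ≤ C * (1 + t) ^ (-α) * (1 + (x - lam * t) ^ 2 / (1 + t)) ^ (-γ)
            * ∫ s in (0:ℝ)..t, (1 + s) ^ (-(β - 1 / 2)) := by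
  obtain ⟨K, hK, hL4⟩ := L4 hD hγ
  refine ⟨2^α * K, by positivity, fun t ht x => ?_⟩
  have hτ : (0:ℝ) < 1 + t := by linarith
  have hBpos : (0:ℝ) < (1 + (x - lam*t)^2/(1+t)) ^ (-γ) :=
    Real.rpow_pos_of_pos (by positivity) _
  set B : ℝ := (1 + (x - lam*t)^2/(1+t)) ^ (-γ) with hBdef
  set g : ℝ → ℝ := fun s => (2^α * K * (1+t)^(-α) * B) * (1+s)^(-(β-1/2)) with hgdef
  have ht2 : (0:ℝ) ≤ t/2 := by linarith
  -- pointwise bound of the inner integral on Ioc 0 (t/2)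
  have hfg : ∀ s ∈ Set.Ioc (0:ℝ) (t/2),
      (∫ y : ℝ, (1 + t - s) ^ (-α)
          * Real.exp (-(x - y - lam * (t - s)) ^ 2 / (D * (1 + t - s)))
          * (1 + s) ^ (-β) * (1 + (y - lam * s) ^ 2 / (1 + s)) ^ (-γ)) ≤ g s := by
    intro s hs
    obtain ⟨hs0, hst⟩ := hs
    have hm : (0:ℝ) < 1 + t - s := by linarith
    have ha : (0:ℝ) < 1 + s := by linarith
    have hfun : (fun y : ℝ => (1 + t - s) ^ (-α)
          * Real.exp (-(x - y - lam * (t - s)) ^ 2 / (D * (1 + t - s)))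
          * (1 + s) ^ (-β) * (1 + (y - lam * s) ^ 2 / (1 + s)) ^ (-γ))
        = fun y : ℝ => ((1 + t - s) ^ (-α) * (1 + s) ^ (-β)) *
            ((fun w : ℝ => Real.exp (-(x - lam*t - w)^2 / (D * (1 + t - s)))
              * (1 + w^2/(1+s)) ^ (-γ)) (y - lam * s)) := by
      funext y
      rw [show x - y - lam * (t - s) = x - lam*t - (y - lam*s) by ring]
      ring
    have hval : (∫ y : ℝ, (1 + t - s) ^ (-α)
          * Real.exp (-(x - y - lam * (t - s)) ^ 2 / (D * (1 + t - s)))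
          * (1 + s) ^ (-β) * (1 + (y - lam * s) ^ 2 / (1 + s)) ^ (-γ))
        = ((1 + t - s) ^ (-α) * (1 + s) ^ (-β)) *
          ∫ w : ℝ, Real.exp (-(x - lam*t - w)^2 / (D * (1 + t - s)))
            * (1 + w^2/(1+s)) ^ (-γ) := by
      rw [hfun, integral_const_mul, integral_sub_right_eq_self
        (fun w : ℝ => Real.exp (-(x - lam*t - w)^2 / (D * (1 + t - s)))
          * (1 + w^2/(1+s)) ^ (-γ)) (lam * s)]
    have hIb : (∫ w : ℝ, Real.exp (-(x - lam*t - w)^2 / (D * (1 + t - s)))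
          * (1 + w^2/(1+s)) ^ (-γ))
        ≤ K * Real.sqrt (1+s) * B := by
      exact hL4 (1+t) (1+s) (1+t-s) (x - lam*t) (by linarith) (by linarith)
        (by linarith) (by linarith)
    have hcb : (1 + t - s) ^ (-α) ≤ 2^α * (1+t)^(-α) := by
      have h1 : (1+t)/2 ≤ 1 + t - s := by linarith
      have h2 : ((1+t)/2) ^ (-α) = 2^α * (1+t)^(-α) := by
        rw [Real.div_rpow hτ.le (by norm_num : (0:ℝ) ≤ 2), Real.rpow_neg (by norm_num : (0:ℝ) ≤ 2),
          div_inv_eq_mul]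
        ring
      rw [← h2]
      exact Real.rpow_le_rpow_of_nonpos (by positivity) h1 (by linarith)
    have hpow : Real.sqrt (1+s) * (1+s)^(-β) = (1+s)^(-(β-1/2)) := by
      rw [Real.sqrt_eq_rpow, ← Real.rpow_add ha]
      congr 1
      ring
    calc (∫ y : ℝ, (1 + t - s) ^ (-α)
          * Real.exp (-(x - y - lam * (t - s)) ^ 2 / (D * (1 + t - s)))
          * (1 + s) ^ (-β) * (1 + (y - lam * s) ^ 2 / (1 + s)) ^ (-γ))
        = ((1 + t - s) ^ (-α) * (1 + s) ^ (-β)) *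
          ∫ w : ℝ, Real.exp (-(x - lam*t - w)^2 / (D * (1 + t - s)))
            * (1 + w^2/(1+s)) ^ (-γ) := hval
      _ ≤ ((1 + t - s) ^ (-α) * (1 + s) ^ (-β)) * (K * Real.sqrt (1+s) * B) := by
          apply mul_le_mul_of_nonneg_left hIb (by positivity)
      _ = (1 + t - s) ^ (-α) * ((1 + s) ^ (-β) * (K * Real.sqrt (1+s) * B)) := by ring
      _ ≤ (2^α * (1+t)^(-α)) * ((1 + s) ^ (-β) * (K * Real.sqrt (1+s) * B)) := by
          apply mul_le_mul_of_nonneg_right hcb (by positivity)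
      _ = (2^α * K * (1+t)^(-α) * B) * (Real.sqrt (1+s) * (1+s)^(-β)) := by ring
      _ = g s := by rw [hpow]
  -- integrability of g on Ioc
  have hgInt : ∀ u : ℝ, 0 ≤ u → IntegrableOn (fun s : ℝ => (1+s)^(-(β-1/2))) (Set.Ioc 0 u) := by
    intro u hu
    apply (ContinuousOn.integrableOn_Icc ?_).mono_set Set.Ioc_subset_Icc_self
    apply ContinuousOn.rpow_const (by fun_prop)
    intro v hv
    left
    have : (0:ℝ) ≤ v := hv.1
    positivity
  have hgnn : ∀ s ∈ Set.Ioc (0:ℝ) t, (0:ℝ) ≤ (1+s)^(-(β-1/2)) := by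
    intro s hs
    have : (0:ℝ) < s := hs.1
    positivity
  -- assemble
  rw [intervalIntegral.integral_of_le ht2, intervalIntegral.integral_of_le (by linarith : (0:ℝ) ≤ t)]
  calc (∫ s in Set.Ioc (0:ℝ) (t/2), ∫ y : ℝ,
          (1 + t - s) ^ (-α)
            * Real.exp (-(x - y - lam * (t - s)) ^ 2 / (D * (1 + t - s)))
            * (1 + s) ^ (-β) * (1 + (y - lam * s) ^ 2 / (1 + s)) ^ (-γ))
      ≤ ∫ s in Set.Ioc (0:ℝ) (t/2), g s := by
        apply integral_mono_of_nonneg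
        · rw [EventuallyLE, ae_restrict_iff' measurableSet_Ioc]
          apply ae_of_all
          intro s hs
          apply integral_nonneg
          intro y
          have hm : (0:ℝ) < 1 + t - s := by
            obtain ⟨h1, h2⟩ := hs
            linarith
          have ha : (0:ℝ) < 1 + s := by
            have := hs.1; linarith
          positivity
        · exact ((hgInt (t/2) ht2).const_mul _)
        · rw [EventuallyLE, ae_restrict_iff' measurableSet_Ioc]
          exact ae_of_all _ hfg
    _ = (2^α * K * (1+t)^(-α) * B) * ∫ s in Set.Ioc (0:ℝ) (t/2), (1+s)^(-(β-1/2)) := by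
        rw [hgdef]
        exact integral_const_mul _ _
    _ ≤ (2^α * K * (1+t)^(-α) * B) * ∫ s in Set.Ioc (0:ℝ) t, (1+s)^(-(β-1/2)) := by
        apply mul_le_mul_of_nonneg_left _ (by positivity)
        apply setIntegral_mono_set (hgInt t (by linarith))
        · rw [EventuallyLE, ae_restrict_iff' measurableSet_Ioc]
          exact ae_of_all _ hgnn
        · exact HasSubset.Subset.eventuallyLE (Set.Ioc_subset_Ioc_right (by linarith))
    _ = 2^α * K * (1+t)^(-α) * B * ∫ s in Set.Ioc (0:ℝ) t, (1+s)^(-(β-1/2)) := by ring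
end

section
/- Let g₀ : ℝ × ℝ³ → ℝ satisfy sup_v (1+|v|)^β |g₀(x,v)| ≤ C (1+|x|²)^{-γ} with γ > 0, let S^t g(x,v) = e^{-ν(v)t} g(x - v₁ t, v) with ν(v) ≥ ν₀(1+|v|), and define J₀(t) = S^t g₀ and, for an operator T bounded from L^∞_{v,β}-weighted decay to itself in the sense ‖T h(x)‖_{L^∞_{v,β}} ≤ C₀ ‖h(x)‖_{L^∞_{v,β}} pointwise in x up to convolution with e^{-|x|}, J_k(t) = ∫₀^t S^{t-s} T J_{k-1}(s) ds. Then for each k ≥ 0 there is C_k such that sup_v (1+|v|)^β |J_k(t,x,v)| ≤ C_k t^k e^{-2ν₀ t/3} (1+|x|²)^{-γ}. -/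
open MeasureTheory Real

private lemma L1_s19 (p μc : ℝ) (hp : 0 < p) (hμ : 0 < μc) :
    ∃ c > 0, ∀ r : ℝ, 0 ≤ r → (1 + r ^ 2) ^ p ≤ c * Real.exp (μc * r) := by
  set ε : ℝ := min 1 (μc / (2 * p)) with hεdef
  have hε : 0 < ε := lt_min one_pos (by positivity)
  have hε1 : ε ≤ 1 := min_le_left _ _
  refine ⟨ε ^ (-(2 * p)), by positivity, fun r hr => ?_⟩
  have h1r : (0:ℝ) ≤ 1 + r := by linarith
  have h2 : (1 + r ^ 2 : ℝ) ^ p ≤ (1 + r) ^ (2 * p) := by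
    calc (1 + r ^ 2 : ℝ) ^ p ≤ ((1 + r) ^ 2) ^ p :=
          Real.rpow_le_rpow (by positivity) (by nlinarith) hp.le
      _ = (1 + r) ^ (2 * p) := by
          rw [← Real.rpow_natCast (1 + r) 2, ← Real.rpow_mul h1r]; norm_num
  have h3 : 1 + r ≤ Real.exp (ε * r) / ε := by
    rw [le_div_iff₀ hε]
    have := Real.add_one_le_exp (ε * r)
    nlinarith
  have h4 : (1 + r) ^ (2 * p) ≤ (Real.exp (ε * r) / ε) ^ (2 * p) :=
    Real.rpow_le_rpow h1r h3 (by positivity)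
  have h5 : (Real.exp (ε * r) / ε) ^ (2 * p) = ε ^ (-(2 * p)) * Real.exp (ε * r * (2 * p)) := by
    rw [Real.div_rpow (Real.exp_nonneg _) hε.le, ← Real.exp_mul, Real.rpow_neg hε.le]
    ring
  have h6 : Real.exp (ε * r * (2 * p)) ≤ Real.exp (μc * r) := by
    apply Real.exp_le_exp.2
    have hle : ε ≤ μc / (2 * p) := min_le_right _ _
    have h2p : (0:ℝ) < 2 * p := by positivity
    have := mul_le_mul_of_nonneg_right hle hr
    calc ε * r * (2 * p) ≤ (μc / (2 * p)) * r * (2 * p) := by nlinarith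
      _ = μc * r := by field_simp
  calc (1 + r ^ 2 : ℝ) ^ p ≤ (Real.exp (ε * r) / ε) ^ (2 * p) := h2.trans h4
    _ = ε ^ (-(2 * p)) * Real.exp (ε * r * (2 * p)) := h5
    _ ≤ ε ^ (-(2 * p)) * Real.exp (μc * r) := by
        exact mul_le_mul_of_nonneg_left h6 (by positivity)

private lemma peetre (γ : ℝ) (hγ : 0 < γ) (u w : ℝ) :
    (1 + u ^ 2) ^ (-γ) ≤ 2 ^ γ * (1 + (u - w) ^ 2) ^ γ * (1 + w ^ 2) ^ (-γ) := by
  have hu : (0:ℝ) < 1 + u ^ 2 := by positivity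
  have hw : (0:ℝ) < 1 + w ^ 2 := by positivity
  have hd : (0:ℝ) < 1 + (u - w) ^ 2 := by positivity
  have hA : (0:ℝ) < (1 + u ^ 2) ^ γ := Real.rpow_pos_of_pos hu γ
  have hW : (0:ℝ) < (1 + w ^ 2) ^ γ := Real.rpow_pos_of_pos hw γ
  have hD : (0:ℝ) < (1 + (u - w) ^ 2) ^ γ := Real.rpow_pos_of_pos hd γ
  have key : (1 + w ^ 2 : ℝ) ^ γ ≤ 2 ^ γ * (1 + (u - w) ^ 2) ^ γ * (1 + u ^ 2) ^ γ := by
    have h2 : ((2 : ℝ) * (1 + (u - w) ^ 2) * (1 + u ^ 2)) ^ γ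
        = 2 ^ γ * (1 + (u - w) ^ 2) ^ γ * (1 + u ^ 2) ^ γ := by
      rw [Real.mul_rpow (by positivity) hu.le, Real.mul_rpow (by norm_num) hd.le]
    rw [← h2]
    exact Real.rpow_le_rpow hw.le (by nlinarith [sq_nonneg (u + (u - w)), sq_nonneg (u * (u - w))]) hγ.le
  rw [Real.rpow_neg hu.le, Real.rpow_neg hw.le]
  calc ((1 + u ^ 2 : ℝ) ^ γ)⁻¹
      = (1 + w ^ 2) ^ γ * (((1 + u ^ 2) ^ γ) * ((1 + w ^ 2) ^ γ))⁻¹ := by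
        field_simp
    _ ≤ (2 ^ γ * (1 + (u - w) ^ 2) ^ γ * (1 + u ^ 2) ^ γ)
          * (((1 + u ^ 2) ^ γ) * ((1 + w ^ 2) ^ γ))⁻¹ :=
        mul_le_mul_of_nonneg_right key (by positivity)
    _ = 2 ^ γ * (1 + (u - w) ^ 2) ^ γ * ((1 + w ^ 2) ^ γ)⁻¹ := by
        field_simp

private lemma master (ν₀ γ : ℝ) (hν₀ : 0 < ν₀) (hγ : 0 < γ) :
    ∃ E > (0:ℝ), ∀ τ V x a : ℝ, 0 ≤ τ → 0 ≤ V → |a| ≤ V * τ →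
      Real.exp (-(ν₀ * (1 + V)) * τ) * (1 + (x - a) ^ 2) ^ (-γ)
        ≤ E * Real.exp (-2 * ν₀ * τ / 3) * (1 + x ^ 2) ^ (-γ) := by
  obtain ⟨c, hc, hcb⟩ := L1_s19 γ ν₀ hγ hν₀
  refine ⟨2 ^ γ * c, by positivity, fun τ V x a hτ hV ha => ?_⟩
  have hp : (1 + (x - a) ^ 2 : ℝ) ^ (-γ) ≤ 2 ^ γ * (1 + a ^ 2) ^ γ * (1 + x ^ 2) ^ (-γ) := by
    have h := peetre γ hγ (x - a) x
    have he : (x - a - x) ^ 2 = a ^ 2 := by ring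
    rwa [he] at h
  have ha2 : (1 + a ^ 2 : ℝ) ^ γ ≤ c * Real.exp (ν₀ * (V * τ)) := by
    have h1 : (1 + a ^ 2 : ℝ) ≤ 1 + (V * τ) ^ 2 := by
      nlinarith [sq_abs a, abs_nonneg a, mul_nonneg hV hτ]
    calc (1 + a ^ 2 : ℝ) ^ γ ≤ (1 + (V * τ) ^ 2) ^ γ :=
          Real.rpow_le_rpow (by positivity) h1 hγ.le
      _ ≤ c * Real.exp (ν₀ * (V * τ)) := hcb (V * τ) (by positivity)
  have hx : (0:ℝ) ≤ (1 + x ^ 2) ^ (-γ) := by positivity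
  calc Real.exp (-(ν₀ * (1 + V)) * τ) * (1 + (x - a) ^ 2) ^ (-γ)
      ≤ Real.exp (-(ν₀ * (1 + V)) * τ) * (2 ^ γ * (1 + a ^ 2) ^ γ * (1 + x ^ 2) ^ (-γ)) :=
        mul_le_mul_of_nonneg_left hp (Real.exp_nonneg _)
    _ ≤ Real.exp (-(ν₀ * (1 + V)) * τ) * (2 ^ γ * (c * Real.exp (ν₀ * (V * τ))) * (1 + x ^ 2) ^ (-γ)) := by
        have : (0:ℝ) ≤ (2:ℝ) ^ γ := by positivity
        exact mul_le_mul_of_nonneg_left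
          (mul_le_mul_of_nonneg_right (mul_le_mul_of_nonneg_left ha2 this) hx)
          (Real.exp_nonneg _)
    _ = 2 ^ γ * c * (Real.exp (-(ν₀ * (1 + V)) * τ) * Real.exp (ν₀ * (V * τ))) * (1 + x ^ 2) ^ (-γ) := by
        ring
    _ = 2 ^ γ * c * Real.exp (-(ν₀ * (1 + V)) * τ + ν₀ * (V * τ)) * (1 + x ^ 2) ^ (-γ) := by
        rw [Real.exp_add]
    _ ≤ 2 ^ γ * c * Real.exp (-2 * ν₀ * τ / 3) * (1 + x ^ 2) ^ (-γ) := by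
        refine mul_le_mul_of_nonneg_right (mul_le_mul_of_nonneg_left ?_ (by positivity)) hx
        exact Real.exp_le_exp.2 (by nlinarith)

private lemma L0 (γ : ℝ) (hγ : 0 < γ) :
    ∃ c > (0:ℝ), ∀ u : ℝ, (1 + u ^ 2) ^ γ * Real.exp (-|u|) ≤ c * (1 + u ^ 2) ^ (-(2:ℝ)) := by
  obtain ⟨c, hc, hcb⟩ := L1_s19 (γ + 2) 1 (by linarith) one_pos
  refine ⟨c, hc, fun u => ?_⟩
  have hu : (0:ℝ) < 1 + u ^ 2 := by positivity
  have h1 : (1 + u ^ 2 : ℝ) ^ (γ + 2) ≤ c * Real.exp |u| := by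
    have := hcb |u| (abs_nonneg u)
    rwa [sq_abs, one_mul] at this
  have h2 : (1 + u ^ 2 : ℝ) ^ (γ + 2) * Real.exp (-|u|) ≤ c := by
    rw [Real.exp_neg]
    rw [mul_inv_le_iff₀ (Real.exp_pos _)]
    linarith [h1]
  have h3 : (1 + u ^ 2 : ℝ) ^ γ = (1 + u ^ 2) ^ (γ + 2) * (1 + u ^ 2) ^ (-(2:ℝ)) := by
    rw [← Real.rpow_add hu]; norm_num
  rw [h3]
  have hx : (0:ℝ) ≤ (1 + u ^ 2) ^ (-(2:ℝ)) := by positivity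
  calc (1 + u ^ 2 : ℝ) ^ (γ + 2) * (1 + u ^ 2) ^ (-(2:ℝ)) * Real.exp (-|u|)
      = ((1 + u ^ 2) ^ (γ + 2) * Real.exp (-|u|)) * (1 + u ^ 2) ^ (-(2:ℝ)) := by ring
    _ ≤ c * (1 + u ^ 2) ^ (-(2:ℝ)) := mul_le_mul_of_nonneg_right h2 hx

private lemma base_int : Integrable (fun z : ℝ => (1 + z ^ 2) ^ (-(2:ℝ))) := by
  have h := integrable_rpow_neg_one_add_norm_sq (E := ℝ) (μ := volume) (r := 4) (by norm_num)
  have : (fun z : ℝ => ((1:ℝ) + ‖z‖ ^ 2) ^ (-(4:ℝ) / 2)) = fun z : ℝ => (1 + z ^ 2) ^ (-(2:ℝ)) := by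
    funext z
    rw [Real.norm_eq_abs, sq_abs]
    norm_num
  rwa [this] at h

private lemma ker_ptwise (γ : ℝ) (hγ : 0 < γ) (c : ℝ) (hcb : ∀ u : ℝ,
      (1 + u ^ 2) ^ γ * Real.exp (-|u|) ≤ c * (1 + u ^ 2) ^ (-(2:ℝ))) (y z : ℝ) :
    Real.exp (-|y - z|) * (1 + z ^ 2) ^ (-γ)
      ≤ 2 ^ γ * c * (1 + y ^ 2) ^ (-γ) * (1 + (z - y) ^ 2) ^ (-(2:ℝ)) := by
  have h1 : (1 + z ^ 2 : ℝ) ^ (-γ) ≤ 2 ^ γ * (1 + (z - y) ^ 2) ^ γ * (1 + y ^ 2) ^ (-γ) :=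
    peetre γ hγ z y
  have habs : |y - z| = |z - y| := abs_sub_comm y z
  calc Real.exp (-|y - z|) * (1 + z ^ 2) ^ (-γ)
      ≤ Real.exp (-|y - z|) * (2 ^ γ * (1 + (z - y) ^ 2) ^ γ * (1 + y ^ 2) ^ (-γ)) :=
        mul_le_mul_of_nonneg_left h1 (Real.exp_nonneg _)
    _ = 2 ^ γ * (1 + y ^ 2) ^ (-γ) * ((1 + (z - y) ^ 2) ^ γ * Real.exp (-|z - y|)) := by
        rw [habs]; ring
    _ ≤ 2 ^ γ * (1 + y ^ 2) ^ (-γ) * (c * (1 + (z - y) ^ 2) ^ (-(2:ℝ))) :=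
        mul_le_mul_of_nonneg_left (hcb (z - y)) (by positivity)
    _ = 2 ^ γ * c * (1 + y ^ 2) ^ (-γ) * (1 + (z - y) ^ 2) ^ (-(2:ℝ)) := by ring

private lemma ker_cont (γ : ℝ) (hγ : 0 < γ) (y : ℝ) :
    Continuous (fun z : ℝ => Real.exp (-|y - z|) * (1 + z ^ 2) ^ (-γ)) := by
  apply Continuous.mul
  · exact Real.continuous_exp.comp ((continuous_const.sub continuous_id).abs.neg)
  · exact Continuous.rpow_const (by continuity) (fun z => Or.inl (by positivity))

private lemma shift_int (y : ℝ) : Integrable (fun z : ℝ => (1 + (z - y) ^ 2) ^ (-(2:ℝ))) :=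
  base_int.comp_sub_right y

private lemma ker_int (γ : ℝ) (hγ : 0 < γ) (y : ℝ) :
    Integrable (fun z : ℝ => Real.exp (-|y - z|) * (1 + z ^ 2) ^ (-γ)) := by
  obtain ⟨c, hc, hcb⟩ := L0 γ hγ
  refine ((shift_int y).const_mul (2 ^ γ * c * (1 + y ^ 2) ^ (-γ))).mono'
    (ker_cont γ hγ y).aestronglyMeasurable (Filter.Eventually.of_forall fun z => ?_)
  rw [Real.norm_eq_abs, abs_of_nonneg (by positivity)]
  exact ker_ptwise γ hγ c hcb y z

private lemma conv_bound (γ : ℝ) (hγ : 0 < γ) :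
    ∃ A > (0:ℝ), ∀ y : ℝ,
      (∫ z : ℝ, Real.exp (-|y - z|) * (1 + z ^ 2) ^ (-γ)) ≤ A * (1 + y ^ 2) ^ (-γ) := by
  obtain ⟨c, hc, hcb⟩ := L0 γ hγ
  set K : ℝ := ∫ z : ℝ, (1 + z ^ 2 : ℝ) ^ (-(2:ℝ)) with hK
  have hK0 : 0 ≤ K := integral_nonneg fun z => by positivity
  refine ⟨2 ^ γ * c * (K + 1), by positivity, fun y => ?_⟩
  have hmono : (∫ z : ℝ, Real.exp (-|y - z|) * (1 + z ^ 2) ^ (-γ))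
      ≤ ∫ z : ℝ, 2 ^ γ * c * (1 + y ^ 2) ^ (-γ) * (1 + (z - y) ^ 2) ^ (-(2:ℝ)) :=
    integral_mono (ker_int γ hγ y) ((shift_int y).const_mul _) (fun z => ker_ptwise γ hγ c hcb y z)
  have hval : (∫ z : ℝ, 2 ^ γ * c * (1 + y ^ 2) ^ (-γ) * (1 + (z - y) ^ 2) ^ (-(2:ℝ)))
      = 2 ^ γ * c * (1 + y ^ 2) ^ (-γ) * K := by
    rw [MeasureTheory.integral_const_mul]
    congr 1
    exact integral_sub_right_eq_self (fun z : ℝ => (1 + z ^ 2 : ℝ) ^ (-(2:ℝ))) y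
  calc (∫ z : ℝ, Real.exp (-|y - z|) * (1 + z ^ 2) ^ (-γ))
      ≤ 2 ^ γ * c * (1 + y ^ 2) ^ (-γ) * K := hmono.trans_eq hval
    _ ≤ 2 ^ γ * c * (K + 1) * (1 + y ^ 2) ^ (-γ) := by
        have hx : (0:ℝ) ≤ (1 + y ^ 2) ^ (-γ) := by positivity
        nlinarith [mul_nonneg (by positivity : (0:ℝ) ≤ 2 ^ γ * c) hx, mul_nonneg (mul_nonneg (by positivity : (0:ℝ) ≤ 2 ^ γ * c) hx) hK0]

theorem stmt19 (ν : EuclideanSpace ℝ (Fin 3) → ℝ) (ν₀ : ℝ) (hν₀ : 0 < ν₀)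
    (hν : ∀ v, ν₀ * (1 + ‖v‖) ≤ ν v)
    (g₀ : ℝ → EuclideanSpace ℝ (Fin 3) → ℝ) (β γ Cg : ℝ) (hβ : 0 ≤ β)
    (hγ : 0 < γ) (hCg : 0 < Cg)
    (hg₀ : ∀ x : ℝ, ∀ v, (1 + ‖v‖) ^ β * |g₀ x v| ≤ Cg * (1 + x ^ 2) ^ (-γ))
    (T : (ℝ → EuclideanSpace ℝ (Fin 3) → ℝ) → ℝ → EuclideanSpace ℝ (Fin 3) → ℝ)
    (C₀ : ℝ) (hC₀ : 0 < C₀)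
    (hT : ∀ h : ℝ → EuclideanSpace ℝ (Fin 3) → ℝ, ∀ x : ℝ, ∀ v,
      (1 + ‖v‖) ^ β * |T h x v|
        ≤ C₀ * ((⨆ w, (1 + ‖w‖) ^ β * |h x w|)
            + ∫ y : ℝ, Real.exp (-|x - y|) * ⨆ w, (1 + ‖w‖) ^ β * |h y w|))
    (J : ℕ → ℝ → ℝ → EuclideanSpace ℝ (Fin 3) → ℝ)
    (hJ0 : ∀ t x v, J 0 t x v = Real.exp (-ν v * t) * g₀ (x - v 0 * t) v)
    (hJk : ∀ k t x v, J (k + 1) t x v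
      = ∫ s in (0:ℝ)..t, Real.exp (-ν v * (t - s)) * T (J k s) (x - v 0 * (t - s)) v) :
    ∀ k : ℕ, ∃ Ck > (0:ℝ), ∀ t ≥ (0:ℝ), ∀ x : ℝ, ∀ v,
      (1 + ‖v‖) ^ β * |J k t x v|
        ≤ Ck * t ^ k * Real.exp (-2 * ν₀ * t / 3) * (1 + x ^ 2) ^ (-γ) := by
  obtain ⟨E, hE, hmaster⟩ := master ν₀ γ hν₀ hγ
  obtain ⟨A, hA, hconv⟩ := conv_bound γ hγ
  have hv0 : ∀ v : EuclideanSpace ℝ (Fin 3), |v 0| ≤ ‖v‖ := by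
    intro v
    rw [EuclideanSpace.norm_eq]
    have h1 : |v 0| = Real.sqrt (‖v 0‖ ^ 2) := by
      rw [Real.sqrt_sq_eq_abs, Real.norm_eq_abs, abs_abs]
    rw [h1]
    apply Real.sqrt_le_sqrt
    exact Finset.single_le_sum (f := fun i => ‖v i‖ ^ 2) (fun i _ => by positivity)
      (Finset.mem_univ 0)
  intro k
  induction k with
  | zero =>
    refine ⟨Cg * E, by positivity, fun t ht x v => ?_⟩
    rw [hJ0]
    have hsplit : (1 + ‖v‖) ^ β * |Real.exp (-ν v * t) * g₀ (x - v 0 * t) v|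
        = Real.exp (-ν v * t) * ((1 + ‖v‖) ^ β * |g₀ (x - v 0 * t) v|) := by
      rw [abs_mul, abs_of_pos (Real.exp_pos _)]; ring
    rw [hsplit]
    have hmono : Real.exp (-ν v * t) ≤ Real.exp (-(ν₀ * (1 + ‖v‖)) * t) := by
      apply Real.exp_le_exp.2
      have := hν v
      nlinarith
    calc Real.exp (-ν v * t) * ((1 + ‖v‖) ^ β * |g₀ (x - v 0 * t) v|)
        ≤ Real.exp (-(ν₀ * (1 + ‖v‖)) * t) * (Cg * (1 + (x - v 0 * t) ^ 2) ^ (-γ)) :=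
          mul_le_mul hmono (hg₀ _ v) (by positivity) (Real.exp_nonneg _)
      _ = Cg * (Real.exp (-(ν₀ * (1 + ‖v‖)) * t) * (1 + (x - v 0 * t) ^ 2) ^ (-γ)) := by ring
      _ ≤ Cg * (E * Real.exp (-2 * ν₀ * t / 3) * (1 + x ^ 2) ^ (-γ)) := by
          refine mul_le_mul_of_nonneg_left ?_ hCg.le
          refine hmaster t ‖v‖ x (v 0 * t) ht (norm_nonneg v) ?_
          rw [abs_mul, abs_of_nonneg ht]
          exact mul_le_mul_of_nonneg_right (hv0 v) ht
      _ = Cg * E * t ^ 0 * Real.exp (-2 * ν₀ * t / 3) * (1 + x ^ 2) ^ (-γ) := by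
          rw [pow_zero]; ring
  | succ k ih =>
    obtain ⟨Ck, hCk, hk⟩ := ih
    refine ⟨C₀ * (1 + A) * E * Ck, by positivity, fun t ht x v => ?_⟩
    rw [hJk]
    set M : ℝ := C₀ * (1 + A) * E * Ck * t ^ k * Real.exp (-2 * ν₀ * t / 3)
      * (1 + x ^ 2) ^ (-γ) with hMdef
    have hβv : (0:ℝ) < (1 + ‖v‖) ^ β := by positivity
    have key : ∀ s ∈ Set.uIoc (0:ℝ) t,
        ‖(1 + ‖v‖) ^ β * (Real.exp (-ν v * (t - s)) * T (J k s) (x - v 0 * (t - s)) v)‖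
          ≤ M := by
      intro s hs
      rw [Set.uIoc_of_le ht] at hs
      obtain ⟨hs0, hst⟩ := hs
      have hτ : (0:ℝ) ≤ t - s := by linarith
      set y : ℝ := x - v 0 * (t - s) with hydef
      have hnn : ‖(1 + ‖v‖) ^ β * (Real.exp (-ν v * (t - s)) * T (J k s) y v)‖
          = Real.exp (-ν v * (t - s)) * ((1 + ‖v‖) ^ β * |T (J k s) y v|) := by
        rw [Real.norm_eq_abs, abs_mul, abs_mul, abs_of_pos hβv, abs_of_pos (Real.exp_pos _)]
        ring
      rw [hnn]
      set c : ℝ := Ck * s ^ k * Real.exp (-2 * ν₀ * s / 3) with hcdef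
      have hc0 : (0:ℝ) ≤ c := by positivity
      have hB : ∀ z : ℝ, ∀ w, (1 + ‖w‖) ^ β * |J k s z w| ≤ c * (1 + z ^ 2) ^ (-γ) := by
        intro z w
        have h := hk s hs0.le z w
        calc (1 + ‖w‖) ^ β * |J k s z w|
            ≤ Ck * s ^ k * Real.exp (-2 * ν₀ * s / 3) * (1 + z ^ 2) ^ (-γ) := h
          _ = c * (1 + z ^ 2) ^ (-γ) := by rw [hcdef]
      have hG : ∀ z : ℝ, (⨆ w, (1 + ‖w‖) ^ β * |J k s z w|) ≤ c * (1 + z ^ 2) ^ (-γ) :=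
        fun z => ciSup_le (fun w => hB z w)
      have hG0 : ∀ z : ℝ, 0 ≤ ⨆ w, (1 + ‖w‖) ^ β * |J k s z w| := by
        intro z
        have hbdd : BddAbove (Set.range fun w => (1 + ‖w‖) ^ β * |J k s z w|) :=
          ⟨c * (1 + z ^ 2) ^ (-γ), by rintro _ ⟨w, rfl⟩; exact hB z w⟩
        exact le_trans (by positivity) (le_ciSup hbdd (0 : EuclideanSpace ℝ (Fin 3)))
      have hint : (∫ z : ℝ, Real.exp (-|y - z|) * ⨆ w, (1 + ‖w‖) ^ β * |J k s z w|)
          ≤ c * (A * (1 + y ^ 2) ^ (-γ)) := by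
        have h1 : (∫ z : ℝ, Real.exp (-|y - z|) * ⨆ w, (1 + ‖w‖) ^ β * |J k s z w|)
            ≤ ∫ z : ℝ, c * (Real.exp (-|y - z|) * (1 + z ^ 2) ^ (-γ)) := by
          apply integral_mono_of_nonneg
          · exact Filter.Eventually.of_forall fun z =>
              mul_nonneg (Real.exp_nonneg _) (hG0 z)
          · exact (ker_int γ hγ y).const_mul c
          · refine Filter.Eventually.of_forall fun z => ?_
            calc Real.exp (-|y - z|) * (⨆ w, (1 + ‖w‖) ^ β * |J k s z w|)
                ≤ Real.exp (-|y - z|) * (c * (1 + z ^ 2) ^ (-γ)) :=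
                  mul_le_mul_of_nonneg_left (hG z) (Real.exp_nonneg _)
              _ = c * (Real.exp (-|y - z|) * (1 + z ^ 2) ^ (-γ)) := by ring
        rw [MeasureTheory.integral_const_mul] at h1
        exact h1.trans (mul_le_mul_of_nonneg_left (hconv y) hc0)
      have hTb : (1 + ‖v‖) ^ β * |T (J k s) y v|
          ≤ C₀ * ((1 + A) * c * (1 + y ^ 2) ^ (-γ)) := by
        calc (1 + ‖v‖) ^ β * |T (J k s) y v|
            ≤ C₀ * ((⨆ w, (1 + ‖w‖) ^ β * |J k s y w|)
                + ∫ z : ℝ, Real.exp (-|y - z|) * ⨆ w, (1 + ‖w‖) ^ β * |J k s z w|) :=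
              hT (J k s) y v
          _ ≤ C₀ * (c * (1 + y ^ 2) ^ (-γ) + c * (A * (1 + y ^ 2) ^ (-γ))) :=
              mul_le_mul_of_nonneg_left (add_le_add (hG y) hint) hC₀.le
          _ = C₀ * ((1 + A) * c * (1 + y ^ 2) ^ (-γ)) := by ring
      have hmono : Real.exp (-ν v * (t - s)) ≤ Real.exp (-(ν₀ * (1 + ‖v‖)) * (t - s)) := by
        apply Real.exp_le_exp.2
        have := hν v
        nlinarith
      calc Real.exp (-ν v * (t - s)) * ((1 + ‖v‖) ^ β * |T (J k s) y v|)
          ≤ Real.exp (-(ν₀ * (1 + ‖v‖)) * (t - s)) * (C₀ * ((1 + A) * c * (1 + y ^ 2) ^ (-γ))) :=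
            mul_le_mul hmono hTb (by positivity) (Real.exp_nonneg _)
        _ = C₀ * (1 + A) * c
            * (Real.exp (-(ν₀ * (1 + ‖v‖)) * (t - s)) * (1 + y ^ 2) ^ (-γ)) := by ring
        _ ≤ C₀ * (1 + A) * c * (E * Real.exp (-2 * ν₀ * (t - s) / 3) * (1 + x ^ 2) ^ (-γ)) := by
            refine mul_le_mul_of_nonneg_left ?_ (by positivity)
            refine hmaster (t - s) ‖v‖ x (v 0 * (t - s)) hτ (norm_nonneg v) ?_
            rw [abs_mul, abs_of_nonneg hτ]
            exact mul_le_mul_of_nonneg_right (hv0 v) hτ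
        _ = C₀ * (1 + A) * E * Ck * s ^ k
            * (Real.exp (-2 * ν₀ * s / 3) * Real.exp (-2 * ν₀ * (t - s) / 3))
            * (1 + x ^ 2) ^ (-γ) := by rw [hcdef]; ring
        _ = C₀ * (1 + A) * E * Ck * s ^ k * Real.exp (-2 * ν₀ * t / 3)
            * (1 + x ^ 2) ^ (-γ) := by
            rw [← Real.exp_add]
            ring_nf
        _ ≤ M := by
            rw [hMdef]
            have hsk : s ^ k ≤ t ^ k := pow_le_pow_left₀ hs0.le hst k
            have : (0:ℝ) ≤ C₀ * (1 + A) * E * Ck := by positivity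
            have hx : (0:ℝ) ≤ (1 + x ^ 2) ^ (-γ) := by positivity
            nlinarith [mul_nonneg (mul_nonneg this (Real.exp_nonneg (-2 * ν₀ * t / 3))) hx,
              mul_le_mul_of_nonneg_left hsk this]
    have hfact : (1 + ‖v‖) ^ β
          * |∫ s in (0:ℝ)..t, Real.exp (-ν v * (t - s)) * T (J k s) (x - v 0 * (t - s)) v|
        = ‖∫ s in (0:ℝ)..t,
            (1 + ‖v‖) ^ β * (Real.exp (-ν v * (t - s)) * T (J k s) (x - v 0 * (t - s)) v)‖ := by
      rw [intervalIntegral.integral_const_mul, Real.norm_eq_abs, abs_mul, abs_of_pos hβv]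
    rw [hfact]
    have hbound := intervalIntegral.norm_integral_le_of_norm_le_const key
    have habs : |t - 0| = t := by rw [sub_zero, abs_of_nonneg ht]
    rw [habs] at hbound
    calc ‖∫ s in (0:ℝ)..t,
            (1 + ‖v‖) ^ β * (Real.exp (-ν v * (t - s)) * T (J k s) (x - v 0 * (t - s)) v)‖
        ≤ M * t := hbound
      _ = C₀ * (1 + A) * E * Ck * t ^ (k + 1) * Real.exp (-2 * ν₀ * t / 3)
          * (1 + x ^ 2) ^ (-γ) := by rw [hMdef, pow_succ]; ring
end
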